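/- arXiv:0907.5114 — 4 statements merged into one kernel-verified Lean document; each statement's English description precedes it below -/
import Mathlib

section
/- Let p, q be integers with 1 ≤ p < q and let α ∈ ℤ. If w is a geodesic word representing the element a^α of BS(p,q), then there exist k ≥ 0 and integers β_1, …, β_k, α_0, α_1, …, α_k such that w = a^{β_k} t a^{β_{k−1}} t ⋯ a^{β_1} t a^{α_0} t⁻¹ a^{α_1} t⁻¹ ⋯ t⁻¹ a^{α_k}; in particular the subsequence of letters of w from {t, t⁻¹} equals t^k (t⁻¹)^k. -/
inductive Letter : Type
  | a | A | t | T
  deriving DecidableEq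

def bsRel (p q : ℤ) : Set (FreeGroup Bool) :=
  {FreeGroup.of true * (FreeGroup.of false) ^ p * (FreeGroup.of true)⁻¹ * (FreeGroup.of false) ^ (-q)}

abbrev BS (p q : ℤ) := PresentedGroup (bsRel p q)

def evalLetter (p q : ℤ) : Letter → BS p q
  | .a => PresentedGroup.of false
  | .A => (PresentedGroup.of false)⁻¹
  | .t => PresentedGroup.of true
  | .T => (PresentedGroup.of true)⁻¹

def eval (p q : ℤ) (w : List Letter) : BS p q := (w.map (evalLetter p q)).prod

def aPow (α : ℤ) : List Letter :=
  if 0 ≤ α then List.replicate α.toNat Letter.a else List.replicate (-α).toNat Letter.A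

def Geodesic (p q : ℤ) (w : List Letter) : Prop :=
  ∀ v : List Letter, eval p q v = eval p q w → w.length ≤ v.length

/-- Ranking of letters in the order `t < T < a < A`. -/
def letterIdx : Letter → ℕ
  | .t => 0
  | .T => 1
  | .a => 2
  | .A => 3

/-- Length-lexicographical strict order on words, with letters ordered `t < T < a < A`. -/
def llLt (u v : List Letter) : Prop :=
  u.length < v.length ∨
    (u.length = v.length ∧ List.Lex (· < ·) (u.map letterIdx) (v.map letterIdx))

/-- `IsLlnf p q v w` : `v` is the length-lexicographical normal form of `w`,
i.e. `v` represents the same element as `w` and no word representing this element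
precedes `v` in the length-lexicographical order. -/
def IsLlnf (p q : ℤ) (v w : List Letter) : Prop :=
  eval p q v = eval p q w ∧ ∀ u : List Letter, eval p q u = eval p q w → ¬ llLt u v

/-- A word contains no factors `a a⁻¹` or `a⁻¹ a`. -/
def Reduced (w : List Letter) : Prop :=
  (∀ u v : List Letter, w ≠ u ++ [Letter.a, Letter.A] ++ v) ∧
  (∀ u v : List Letter, w ≠ u ++ [Letter.A, Letter.a] ++ v)

/-- A word is Britton-reduced: it has no factors `a a⁻¹`, `a⁻¹ a`,
`t a^{pμ} t⁻¹` or `t⁻¹ a^{qμ} t` (with `μ ∈ ℤ`). -/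
def BrittonReduced (p q : ℤ) (w : List Letter) : Prop :=
  Reduced w ∧
  (∀ u v : List Letter, ∀ μ : ℤ, w ≠ u ++ [Letter.t] ++ aPow (p * μ) ++ [Letter.T] ++ v) ∧
  (∀ u v : List Letter, ∀ μ : ℤ, w ≠ u ++ [Letter.T] ++ aPow (q * μ) ++ [Letter.t] ++ v)

/-- The t-sequence of a word: its subsequence of letters from `{t, t⁻¹}`. -/
def tSeq (w : List Letter) : List Letter :=
  w.filter (fun c => c == Letter.t || c == Letter.T)

/-- The geodesic length of a group element: the least length of a word representing it. -/
noncomputable def geodesicLength (p q : ℤ) (g : BS p q) : ℕ :=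
  sInf {n : ℕ | ∃ w : List Letter, eval p q w = g ∧ w.length = n}

/-- A valley: every prefix has height `≤ 0` and the total height is `0`,
where the height of a prefix is (number of `t`'s) − (number of `t⁻¹`'s). -/
def IsValley (w : List Letter) : Prop :=
  (∀ u v : List Letter, w = u ++ v → u.count Letter.t ≤ u.count Letter.T) ∧
  w.count Letter.t = w.count Letter.T


open Subgroup Multiplicative

namespace BSAux

abbrev Z := Multiplicative ℤ
def z (n : ℤ) : Z := Multiplicative.ofAdd n

lemma z_inj : Function.Injective z := fun _ _ h => ofAdd.injective h

lemma toAdd_z (n : ℤ) : Multiplicative.toAdd (z n) = n := rfl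

lemma z_pow (m n : ℤ) : z m ^ n = z (m * n) := by
  show ofAdd m ^ n = ofAdd (m * n)
  rw [← ofAdd_zsmul, smul_eq_mul, mul_comm]

lemma z_mul (m n : ℤ) : z m * z n = z (m + n) := rfl

def Ap (p : ℤ) : Subgroup Z := Subgroup.zpowers (z p)

lemma mem_Ap_iff {p γ : ℤ} : z γ ∈ Ap p ↔ p ∣ γ := by
  rw [Ap, Subgroup.mem_zpowers_iff]
  constructor
  · rintro ⟨k, hk⟩
    rw [z_pow] at hk
    exact ⟨k, (z_inj hk).symm⟩
  · rintro ⟨k, rfl⟩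
    exact ⟨k, z_pow p k⟩

lemma mem_Ap_mul (p μ : ℤ) : z (p * μ) ∈ Ap p := mem_Ap_iff.2 ⟨μ, rfl⟩

def bsphi (p q : ℤ) (hp : p ≠ 0) (hq : q ≠ 0) : Ap p ≃* Ap q where
  toFun x := ⟨z (q * (Multiplicative.toAdd x.1 / p)), mem_Ap_mul q _⟩
  invFun y := ⟨z (p * (Multiplicative.toAdd y.1 / q)), mem_Ap_mul p _⟩
  left_inv x := by
    obtain ⟨γ, hmem⟩ := x
    obtain ⟨k, hk⟩ : (p : ℤ) ∣ Multiplicative.toAdd γ :=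
      mem_Ap_iff.1 (show z (Multiplicative.toAdd γ) ∈ Ap p from hmem)
    ext
    show z (p * (Multiplicative.toAdd (z (q * (Multiplicative.toAdd γ / p))) / q)) = γ
    rw [toAdd_z, hk, Int.mul_ediv_cancel_left _ hp, Int.mul_ediv_cancel_left _ hq]
    exact (congrArg ofAdd hk).symm
  right_inv y := by
    obtain ⟨γ, hmem⟩ := y
    obtain ⟨k, hk⟩ : (q : ℤ) ∣ Multiplicative.toAdd γ :=
      mem_Ap_iff.1 (show z (Multiplicative.toAdd γ) ∈ Ap q from hmem)
    ext
    show z (q * (Multiplicative.toAdd (z (p * (Multiplicative.toAdd γ / q))) / p)) = γ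
    rw [toAdd_z, hk, Int.mul_ediv_cancel_left _ hq, Int.mul_ediv_cancel_left _ hp]
    exact (congrArg ofAdd hk).symm
  map_mul' x y := by
    obtain ⟨k, hk⟩ : (p : ℤ) ∣ Multiplicative.toAdd x.1 :=
      mem_Ap_iff.1 (show z (Multiplicative.toAdd x.1) ∈ Ap p from x.2)
    obtain ⟨l, hl⟩ : (p : ℤ) ∣ Multiplicative.toAdd y.1 :=
      mem_Ap_iff.1 (show z (Multiplicative.toAdd y.1) ∈ Ap p from y.2)
    ext
    show z (q * (Multiplicative.toAdd (x.1 * y.1) / p)) =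
      z (q * (Multiplicative.toAdd x.1 / p)) * z (q * (Multiplicative.toAdd y.1 / p))
    rw [z_mul]
    congr 1
    have h2 : Multiplicative.toAdd (x.1 * y.1) = Multiplicative.toAdd x.1 + Multiplicative.toAdd y.1 := rfl
    rw [h2, hk, hl, ← mul_add, Int.mul_ediv_cancel_left _ hp, Int.mul_ediv_cancel_left _ hp,
      Int.mul_ediv_cancel_left _ hp, mul_add]

lemma bsphi_apply (p q : ℤ) (hp : p ≠ 0) (hq : q ≠ 0) (μ : ℤ) (h : z (p * μ) ∈ Ap p) :
    ((bsphi p q hp hq ⟨z (p * μ), h⟩ : Ap q) : Z) = z (q * μ) := by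
  show z (q * (Multiplicative.toAdd (z (p * μ)) / p)) = z (q * μ)
  rw [toAdd_z, Int.mul_ediv_cancel_left _ hp]

lemma bsphi_symm_apply (p q : ℤ) (hp : p ≠ 0) (hq : q ≠ 0) (μ : ℤ) (h : z (q * μ) ∈ Ap q) :
    (((bsphi p q hp hq).symm ⟨z (q * μ), h⟩ : Ap p) : Z) = z (p * μ) := by
  show z (p * (Multiplicative.toAdd (z (q * μ)) / q)) = z (p * μ)
  rw [toAdd_z, Int.mul_ediv_cancel_left _ hq]

section Homs

variable (p q : ℤ) (hp : p ≠ 0) (hq : q ≠ 0)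

abbrev H := HNNExtension Z (Ap p) (Ap q) (bsphi p q hp hq)

/-- image of a single letter in the HNN extension -/
def hLetter : Letter → H p q hp hq
  | .a => HNNExtension.of (z 1)
  | .A => (HNNExtension.of (z 1))⁻¹
  | .t => HNNExtension.t
  | .T => (HNNExtension.t)⁻¹

def hEval (w : List Letter) : H p q hp hq := (w.map (hLetter p q hp hq)).prod

abbrev aBS : BS p q := PresentedGroup.of false
abbrev tBS : BS p q := PresentedGroup.of true

lemma relator_eq : tBS p q * aBS p q ^ p * (tBS p q)⁻¹ = aBS p q ^ q := by
  have hmem : (FreeGroup.of true * (FreeGroup.of false) ^ p * (FreeGroup.of true)⁻¹ *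
      (FreeGroup.of false) ^ (-q)) ∈ Subgroup.normalClosure (bsRel p q) :=
    Subgroup.subset_normalClosure rfl
  have h1 : PresentedGroup.mk (bsRel p q) (FreeGroup.of true * (FreeGroup.of false) ^ p *
      (FreeGroup.of true)⁻¹ * (FreeGroup.of false) ^ (-q)) = 1 :=
    (QuotientGroup.eq_one_iff _).2 hmem
  rw [map_mul, map_mul, map_mul, map_zpow, map_zpow, map_inv] at h1
  have h2 : tBS p q * aBS p q ^ p * (tBS p q)⁻¹ * aBS p q ^ (-q) = 1 := h1
  rw [zpow_neg] at h2
  exact eq_of_mul_inv_eq_one (by simpa using h2)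

lemma relator_pow (k : ℤ) : tBS p q * aBS p q ^ (p * k) * (tBS p q)⁻¹ = aBS p q ^ (q * k) := by
  have h1 : (MulAut.conj (tBS p q)) (aBS p q ^ p) = aBS p q ^ q := by
    rw [MulAut.conj_apply]; exact relator_eq p q
  have h2 : (MulAut.conj (tBS p q)) (aBS p q ^ (p * k)) = aBS p q ^ (q * k) := by
    rw [zpow_mul, zpow_mul, ← h1, ← map_zpow]
  rw [MulAut.conj_apply] at h2
  exact h2

lemma relator_pow' (k : ℤ) : tBS p q * aBS p q ^ (p * k) = aBS p q ^ (q * k) * tBS p q := by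
  have h := relator_pow p q k
  rw [← h]; group

lemma relator_pow'' (k : ℤ) : aBS p q ^ (p * k) * (tBS p q)⁻¹ = (tBS p q)⁻¹ * aBS p q ^ (q * k) := by
  have h := relator_pow' p q k
  have h2 : aBS p q ^ (p * k) * (tBS p q)⁻¹ = (tBS p q)⁻¹ * (tBS p q * aBS p q ^ (p * k)) * (tBS p q)⁻¹ := by
    group
  rw [h2, h]; group

def fgen : Bool → H p q hp hq := fun b => if b then HNNExtension.t else HNNExtension.of (z 1)

lemma t_conj_hnn (μ : ℤ) : HNNExtension.t * HNNExtension.of (z (p * μ)) * HNNExtension.t⁻¹ =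
    (HNNExtension.of (z (q * μ)) : H p q hp hq) := by
  have h := HNNExtension.equiv_eq_conj (φ := bsphi p q hp hq) ⟨z (p * μ), mem_Ap_mul p μ⟩
  rw [bsphi_apply p q hp hq μ] at h
  exact h.symm

lemma t_conj_hnn' (μ : ℤ) : HNNExtension.t⁻¹ * HNNExtension.of (z (q * μ)) * HNNExtension.t =
    (HNNExtension.of (z (p * μ)) : H p q hp hq) := by
  have h := HNNExtension.equiv_symm_eq_conj (φ := bsphi p q hp hq) ⟨z (q * μ), mem_Ap_mul q μ⟩
  rw [bsphi_symm_apply p q hp hq μ] at h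
  exact h.symm

lemma hrels : ∀ r ∈ bsRel p q, FreeGroup.lift (fgen p q hp hq) r = 1 := by
  intro r hr
  rcases hr with rfl
  rw [map_mul, map_mul, map_mul, map_zpow, map_zpow, map_inv]
  rw [FreeGroup.lift_apply_of, FreeGroup.lift_apply_of]
  show HNNExtension.t * HNNExtension.of (z 1) ^ p * HNNExtension.t⁻¹ *
    HNNExtension.of (z 1) ^ (-q) = 1
  rw [← map_zpow, ← map_zpow, z_pow, z_pow, one_mul, one_mul]
  have h := t_conj_hnn p q hp hq 1
  rw [mul_one, mul_one] at h
  rw [h]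
  rw [← map_mul]
  have h2 : z q * z (-q) = 1 := by rw [z_mul, add_neg_cancel]; rfl
  rw [h2, map_one]

def psi : BS p q →* H p q hp hq := PresentedGroup.toGroup (hrels p q hp hq)

lemma psi_evalLetter (l : Letter) : psi p q hp hq (evalLetter p q l) = hLetter p q hp hq l := by
  cases l <;> simp [psi, evalLetter, hLetter, fgen, PresentedGroup.toGroup.of]

lemma psi_eval (w : List Letter) : psi p q hp hq (eval p q w) = hEval p q hp hq w := by
  rw [eval, hEval, map_list_prod, List.map_map]
  congr 1
  exact List.map_congr_left (fun l _ => psi_evalLetter p q hp hq l)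

def theta : H p q hp hq →* BS p q :=
  HNNExtension.lift (zpowersHom (BS p q) (aBS p q)) (tBS p q) (by
    rintro ⟨γ, hmem⟩
    obtain ⟨k, hk⟩ : (p : ℤ) ∣ Multiplicative.toAdd γ :=
      mem_Ap_iff.1 (show z (Multiplicative.toAdd γ) ∈ Ap p from hmem)
    have h1 : (bsphi p q hp hq ⟨γ, hmem⟩ : Z) = z (q * k) := by
      have : (⟨γ, hmem⟩ : Ap p) = ⟨z (p * k), mem_Ap_mul p k⟩ := by
        ext; exact (congrArg ofAdd hk)
      rw [this, bsphi_apply]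
    rw [h1]
    simp only [zpowersHom_apply, toAdd_z]
    rw [hk]
    exact relator_pow' p q k)

lemma theta_psi (g : BS p q) : theta p q hp hq (psi p q hp hq g) = g := by
  have h : (theta p q hp hq).comp (psi p q hp hq) = MonoidHom.id (BS p q) := by
    apply PresentedGroup.ext
    intro x
    cases x <;>
      simp [psi, theta, PresentedGroup.toGroup.of, fgen, MonoidHom.comp_apply, toAdd_z]
  calc theta p q hp hq (psi p q hp hq g) = ((theta p q hp hq).comp (psi p q hp hq)) g := rfl
    _ = g := by rw [h]; rfl

lemma pull (w : List Letter) (γ : ℤ) (h : hEval p q hp hq w = HNNExtension.of (z γ)) :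
    eval p q w = aBS p q ^ γ := by
  have h1 : eval p q w = theta p q hp hq (psi p q hp hq (eval p q w)) := (theta_psi p q hp hq _).symm
  rw [psi_eval, h] at h1
  rw [h1, theta, HNNExtension.lift_of]
  simp [toAdd_z]

end Homs

end BSAux

namespace BSAux

section Comb

variable (p q : ℤ) (hp : p ≠ 0) (hq : q ≠ 0)

lemma z_zero : z 0 = 1 := rfl

lemma tSeq_append (u v : List Letter) : tSeq (u ++ v) = tSeq u ++ tSeq v := by
  simp [tSeq, List.filter_append]

lemma tSeq_cons_t (w : List Letter) : tSeq (.t :: w) = .t :: tSeq w := rfl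
lemma tSeq_cons_T (w : List Letter) : tSeq (.T :: w) = .T :: tSeq w := rfl
lemma tSeq_cons_a (w : List Letter) : tSeq (.a :: w) = tSeq w := rfl
lemma tSeq_cons_A (w : List Letter) : tSeq (.A :: w) = tSeq w := rfl

lemma tSeq_replicate_a (n : ℕ) : tSeq (List.replicate n .a) = [] := by
  induction n with
  | zero => rfl
  | succ n ih => rw [List.replicate_succ]; exact ih

lemma tSeq_replicate_A (n : ℕ) : tSeq (List.replicate n .A) = [] := by
  induction n with
  | zero => rfl
  | succ n ih => rw [List.replicate_succ]; exact ih

lemma tSeq_aPow (γ : ℤ) : tSeq (aPow γ) = [] := by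
  rw [aPow]; split
  · exact tSeq_replicate_a _
  · exact tSeq_replicate_A _

lemma tSeq_mid_ne_t {x y : List Letter} : tSeq (x ++ .t :: y) ≠ [] := by
  rw [tSeq_append, tSeq_cons_t]; simp

lemma tSeq_mid_ne_T {x y : List Letter} : tSeq (x ++ .T :: y) ≠ [] := by
  rw [tSeq_append, tSeq_cons_T]; simp

lemma hEval_nil : hEval p q hp hq [] = 1 := rfl

lemma hEval_cons (c : Letter) (w : List Letter) :
    hEval p q hp hq (c :: w) = hLetter p q hp hq c * hEval p q hp hq w := by
  rw [hEval, hEval, List.map_cons, List.prod_cons]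

lemma hEval_append (u v : List Letter) :
    hEval p q hp hq (u ++ v) = hEval p q hp hq u * hEval p q hp hq v := by
  rw [hEval, hEval, hEval, List.map_append, List.prod_append]

lemma eval_cons (c : Letter) (w : List Letter) :
    eval p q (c :: w) = evalLetter p q c * eval p q w := by
  rw [eval, eval, List.map_cons, List.prod_cons]

lemma eval_append (u v : List Letter) :
    eval p q (u ++ v) = eval p q u * eval p q v := by
  rw [eval, eval, eval, List.map_append, List.prod_append]

lemma hEval_replicate_a (n : ℕ) :
    hEval p q hp hq (List.replicate n .a) = HNNExtension.of (z n) := by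
  induction n with
  | zero => rw [List.replicate_zero, hEval_nil, Nat.cast_zero, z_zero, map_one]
  | succ n ih =>
    rw [List.replicate_succ, hEval_cons, ih]
    show HNNExtension.of (z 1) * _ = _
    rw [← map_mul, z_mul]
    congr 2
    push_cast; ring

lemma hEval_replicate_A (n : ℕ) :
    hEval p q hp hq (List.replicate n .A) = HNNExtension.of (z (-n)) := by
  induction n with
  | zero => rw [List.replicate_zero, hEval_nil, Nat.cast_zero, neg_zero, z_zero, map_one]
  | succ n ih =>
    rw [List.replicate_succ, hEval_cons, ih]
    show (HNNExtension.of (z 1))⁻¹ * _ = _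
    rw [← map_inv, ← map_mul]
    congr 1
    show z (-1) * z (-n) = z (-(n+1))
    rw [z_mul]; congr 1; push_cast; ring

lemma hEval_aPow (γ : ℤ) : hEval p q hp hq (aPow γ) = HNNExtension.of (z γ) := by
  rw [aPow]; split
  · rw [hEval_replicate_a]; congr 2; omega
  · rw [hEval_replicate_A]; congr 2; omega

lemma aPow_length (γ : ℤ) : (aPow γ).length = γ.natAbs := by
  rw [aPow]; split <;> rw [List.length_replicate] <;> omega

lemma tfree_val (m : List Letter) (hm : tSeq m = []) :
    ∃ γ : ℤ, γ.natAbs ≤ m.length ∧ hEval p q hp hq m = HNNExtension.of (z γ) := by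
  induction m with
  | nil => exact ⟨0, by norm_num, by rw [hEval_nil, z_zero, map_one]⟩
  | cons c r ih =>
    cases c with
    | t => rw [tSeq_cons_t] at hm; simp at hm
    | T => rw [tSeq_cons_T] at hm; simp at hm
    | a =>
      rw [tSeq_cons_a] at hm
      obtain ⟨γ, hb, hv⟩ := ih hm
      refine ⟨1 + γ, ?_, ?_⟩
      · simp only [List.length_cons]; omega
      · rw [hEval_cons, hv]
        show HNNExtension.of (z 1) * _ = _
        rw [← map_mul, z_mul]
    | A =>
      rw [tSeq_cons_A] at hm
      obtain ⟨γ, hb, hv⟩ := ih hm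
      refine ⟨-1 + γ, ?_, ?_⟩
      · simp only [List.length_cons]; omega
      · rw [hEval_cons, hv]
        show (HNNExtension.of (z 1))⁻¹ * _ = _
        rw [← map_inv, ← map_mul]
        congr 1

lemma split_occ {x y s r : List Letter} {ℓ : Letter} (h : x ++ y = s ++ ℓ :: r) :
    (∃ s₁, x = s ++ ℓ :: s₁ ∧ r = s₁ ++ y) ∨ (∃ s₂, y = s₂ ++ ℓ :: r ∧ s = x ++ s₂) := by
  have h' : x ++ y = s ++ ([ℓ] ++ r) := by simpa using h
  rcases List.append_eq_append_iff.1 h' with ⟨a', ha1, ha2⟩ | ⟨c', hc1, hc2⟩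
  · exact Or.inr ⟨a', by simpa using ha2, ha1⟩
  · cases c' with
    | nil =>
      refine Or.inr ⟨[], ?_, by simp [hc1]⟩
      have : ℓ :: r = y := by simpa using hc2
      simp [← this]
    | cons d c'' =>
      have hc2' : ℓ :: r = d :: (c'' ++ y) := by simpa using hc2
      injection hc2' with h1 h2
      exact Or.inl ⟨c'', by rw [hc1, h1], h2⟩

lemma occ_tri {u r u' r' : List Letter} {c c' : Letter} (h : u ++ c :: r = u' ++ c' :: r') :
    (u = u' ∧ c = c' ∧ r = r') ∨
    (∃ s, u = u' ++ c' :: s ∧ r' = s ++ c :: r) ∨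
    (∃ s, u' = u ++ c :: s ∧ r = s ++ c' :: r') := by
  rcases split_occ (x := u) (y := c :: r) h with ⟨s₁, h1, h2⟩ | ⟨s₂, h1, h2⟩
  · exact Or.inr (Or.inl ⟨s₁, h1, h2⟩)
  · cases s₂ with
    | nil =>
      simp only [List.nil_append] at h1
      injection h1 with h3 h4
      refine Or.inl ⟨?_, h3, h4⟩
      simpa using h2.symm
    | cons d s₂' =>
      injection h1 with h3 h4
      exact Or.inr (Or.inr ⟨s₂', by rw [h2, h3], h4⟩)

lemma split3 {x c y s r : List Letter} {ℓ : Letter} (hc : tSeq c = [])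
    (hl : ℓ = .t ∨ ℓ = .T) (h : x ++ c ++ y = s ++ ℓ :: r) :
    (∃ s₁, x = s ++ ℓ :: s₁ ∧ r = s₁ ++ c ++ y) ∨
    (∃ s₂, y = s₂ ++ ℓ :: r ∧ s = x ++ c ++ s₂) := by
  rw [List.append_assoc] at h
  rcases split_occ h with ⟨s₁, h1, h2⟩ | ⟨s₂, h1, h2⟩
  · exact Or.inl ⟨s₁, h1, by rw [h2, List.append_assoc]⟩
  · rcases split_occ h1 with ⟨s₃, h3, h4⟩ | ⟨s₄, h3, h4⟩
    · exfalso
      rcases hl with rfl | rfl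
      · exact tSeq_mid_ne_t (h3 ▸ hc)
      · exact tSeq_mid_ne_T (h3 ▸ hc)
    · exact Or.inr ⟨s₄, h3, by rw [h2, h4, List.append_assoc]⟩

lemma tSeq_cons_eq (c : Letter) (r : List Letter) (hc : (c == Letter.t || c == Letter.T) = true) :
    tSeq (c :: r) = c :: tSeq r := by
  simp only [tSeq, List.filter_cons, hc]; rfl

lemma tSeq_cons_eq' (c : Letter) (r : List Letter) (hc : ¬ (c == Letter.t || c == Letter.T) = true) :
    tSeq (c :: r) = tSeq r := by
  simp only [tSeq, List.filter_cons]
  rw [if_neg hc]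

lemma filter_split {w s₁ s₂ : List Letter} {x : Letter}
    (h : tSeq w = s₁ ++ x :: s₂) :
    ∃ u v, w = u ++ x :: v ∧ tSeq u = s₁ ∧ tSeq v = s₂ := by
  induction w generalizing s₁ with
  | nil => exact absurd h (by simp [tSeq])
  | cons c r ih =>
    by_cases hc : (c == Letter.t || c == Letter.T) = true
    · rw [tSeq_cons_eq c r hc] at h
      cases s₁ with
      | nil =>
        simp only [List.nil_append] at h
        injection h with h1 h2
        exact ⟨[], r, by rw [h1]; rfl, rfl, h2⟩
      | cons d s₁' =>
        injection h with h1 h2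
        obtain ⟨u, v, hw2, hu, hv⟩ := ih h2
        refine ⟨c :: u, v, by rw [hw2]; rfl, ?_, hv⟩
        rw [tSeq_cons_eq c u hc, hu, h1]
    · rw [tSeq_cons_eq' c r hc] at h
      obtain ⟨u, v, hw2, hu, hv⟩ := ih h
      refine ⟨c :: u, v, by rw [hw2]; rfl, ?_, hv⟩
      rw [tSeq_cons_eq' c u hc, hu]

lemma notchain {α : Type*} {R : α → α → Prop} {l : List α} (h : ¬ List.Chain' R l) :
    ∃ l₁ a b l₂, l = l₁ ++ a :: b :: l₂ ∧ ¬ R a b := by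
  induction l with
  | nil => exact absurd List.isChain_nil h
  | cons c r ih =>
    cases r with
    | nil => exact absurd (List.isChain_singleton c) h
    | cons d r' =>
      change ¬ List.IsChain R (c :: d :: r') at h
      rw [List.isChain_cons_cons] at h
      by_cases hcd : R c d
      · have h2 : ¬ List.Chain' R (d :: r') := fun hh => h ⟨hcd, hh⟩
        obtain ⟨l₁, a, b, l₂, hl, hR⟩ := ih h2
        exact ⟨c :: l₁, a, b, l₂, by rw [hl]; rfl, hR⟩
      · exact ⟨[], c, d, r', rfl, hcd⟩

end Comb

end BSAux

namespace BSAux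

def scan : List Letter → Z × List (ℤˣ × Z)
  | [] => (1, [])
  | Letter.a :: r => (z 1 * (scan r).1, (scan r).2)
  | Letter.A :: r => ((z 1)⁻¹ * (scan r).1, (scan r).2)
  | Letter.t :: r => (1, (1, (scan r).1) :: (scan r).2)
  | Letter.T :: r => (1, (-1, (scan r).1) :: (scan r).2)

def ltr : ℤˣ → Letter := fun u => if u = 1 then Letter.t else Letter.T

lemma ltr_one : ltr 1 = Letter.t := rfl
lemma ltr_neg_one : ltr (-1) = Letter.T := by
  rw [ltr, if_neg]; decide

section Scan

variable (p q : ℤ) (hp : p ≠ 0) (hq : q ≠ 0)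

lemma scan_prod (w : List Letter) :
    hEval p q hp hq w = HNNExtension.of (scan w).1 *
      ((scan w).2.map (fun x => (HNNExtension.t : H p q hp hq) ^ (x.1 : ℤ) *
        HNNExtension.of x.2)).prod := by
  induction w with
  | nil => simp [scan, hEval_nil]
  | cons c r ih =>
    cases c with
    | a =>
      rw [hEval_cons, ih]
      show HNNExtension.of (z 1) * _ = _
      rw [scan, map_mul, mul_assoc]
    | A =>
      rw [hEval_cons, ih]
      show (HNNExtension.of (z 1))⁻¹ * _ = _
      rw [scan, map_mul, map_inv, mul_assoc]
    | t =>
      rw [hEval_cons, ih]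
      show HNNExtension.t * _ = _
      rw [scan]
      simp only [List.map_cons, List.prod_cons, map_one, one_mul, Units.val_one, zpow_one]
      rw [mul_assoc]
    | T =>
      rw [hEval_cons, ih]
      show HNNExtension.t⁻¹ * _ = _
      rw [scan]
      simp only [List.map_cons, List.prod_cons, map_one, one_mul, Units.val_neg, Units.val_one,
        zpow_neg, zpow_one]
      rw [mul_assoc]

lemma scan_nil (w : List Letter) (h : (scan w).2 = []) : tSeq w = [] := by
  induction w with
  | nil => rfl
  | cons c r ih =>
    cases c with
    | a => rw [tSeq_cons_a]; exact ih h
    | A => rw [tSeq_cons_A]; exact ih h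
    | t => exact absurd h (by rw [scan]; simp)
    | T => exact absurd h (by rw [scan]; simp)

lemma scan_first (w : List Letter) (u : ℤˣ) (g : Z) (L : List (ℤˣ × Z))
    (h : (scan w).2 = (u, g) :: L) :
    ∃ m V, w = m ++ ltr u :: V ∧ tSeq m = [] ∧
      hEval p q hp hq m = HNNExtension.of ((scan w).1) ∧ (scan V).1 = g ∧ (scan V).2 = L := by
  induction w with
  | nil => exact absurd h (by rw [scan]; simp)
  | cons c r ih =>
    cases c with
    | a =>
      obtain ⟨m, V, h1, h2, h3, h4, h5⟩ := ih (by simp only [scan] at h ⊢; exact h)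
      refine ⟨Letter.a :: m, V, by rw [h1]; rfl, by rw [tSeq_cons_a]; exact h2, ?_, h4, h5⟩
      rw [hEval_cons, h3]
      show HNNExtension.of (z 1) * _ = _
      rw [← map_mul]; rfl
    | A =>
      obtain ⟨m, V, h1, h2, h3, h4, h5⟩ := ih (by simp only [scan] at h ⊢; exact h)
      refine ⟨Letter.A :: m, V, by rw [h1]; rfl, by rw [tSeq_cons_A]; exact h2, ?_, h4, h5⟩
      rw [hEval_cons, h3]
      show (HNNExtension.of (z 1))⁻¹ * _ = _
      rw [← map_inv, ← map_mul]; rfl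
    | t =>
      rw [scan] at h
      simp only [List.cons.injEq, Prod.mk.injEq] at h
      obtain ⟨⟨hu, hg⟩, hL⟩ := h
      refine ⟨[], r, by rw [← hu, ltr_one]; rfl, rfl, ?_, hg, hL⟩
      rw [hEval_nil, scan, map_one]
    | T =>
      rw [scan] at h
      simp only [List.cons.injEq, Prod.mk.injEq] at h
      obtain ⟨⟨hu, hg⟩, hL⟩ := h
      refine ⟨[], r, by rw [← hu, ltr_neg_one]; rfl, rfl, ?_, hg, hL⟩
      rw [hEval_nil, scan, map_one]

lemma scan_adj (w : List Letter) (L₁ : List (ℤˣ × Z)) (u : ℤˣ) (g : Z) (u' : ℤˣ) (g' : Z)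
    (L₂ : List (ℤˣ × Z)) (h : (scan w).2 = L₁ ++ (u, g) :: (u', g') :: L₂) :
    ∃ U m V, w = U ++ ltr u :: (m ++ ltr u' :: V) ∧ tSeq m = [] ∧
      hEval p q hp hq m = HNNExtension.of g := by
  induction w generalizing L₁ with
  | nil => exact absurd h (by rw [scan]; simp)
  | cons c r ih =>
    cases c with
    | a =>
      obtain ⟨U, m, V, h1, h2, h3⟩ := ih L₁ (by simp only [scan] at h ⊢; exact h)
      exact ⟨Letter.a :: U, m, V, by rw [h1]; rfl, h2, h3⟩
    | A =>
      obtain ⟨U, m, V, h1, h2, h3⟩ := ih L₁ (by simp only [scan] at h ⊢; exact h)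
      exact ⟨Letter.A :: U, m, V, by rw [h1]; rfl, h2, h3⟩
    | t =>
      rw [scan] at h
      cases L₁ with
      | nil =>
        simp only [List.nil_append, List.cons.injEq, Prod.mk.injEq] at h
        obtain ⟨⟨hu, hg⟩, hL⟩ := h
        obtain ⟨m, V, h1, h2, h3, _, _⟩ := scan_first p q hp hq r u' g' L₂ hL
        refine ⟨[], m, V, by rw [← hu, ltr_one, h1]; rfl, h2, ?_⟩
        rw [h3, hg]
      | cons e L₁' =>
        simp only [List.cons_append, List.cons.injEq] at h
        obtain ⟨U, m, V, h1, h2, h3⟩ := ih L₁' h.2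
        exact ⟨Letter.t :: U, m, V, by rw [h1]; rfl, h2, h3⟩
    | T =>
      rw [scan] at h
      cases L₁ with
      | nil =>
        simp only [List.nil_append, List.cons.injEq, Prod.mk.injEq] at h
        obtain ⟨⟨hu, hg⟩, hL⟩ := h
        obtain ⟨m, V, h1, h2, h3, _, _⟩ := scan_first p q hp hq r u' g' L₂ hL
        refine ⟨[], m, V, by rw [← hu, ltr_neg_one, h1]; rfl, h2, ?_⟩
        rw [h3, hg]
      | cons e L₁' =>
        simp only [List.cons_append, List.cons.injEq] at h
        obtain ⟨U, m, V, h1, h2, h3⟩ := ih L₁' h.2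
        exact ⟨Letter.T :: U, m, V, by rw [h1]; rfl, h2, h3⟩

lemma pinch (w : List Letter)
    (hrange : hEval p q hp hq w ∈ (HNNExtension.of : Z →* H p q hp hq).range)
    (hne : tSeq w ≠ []) :
    ∃ u m v, tSeq m = [] ∧
      ((w = u ++ .t :: (m ++ .T :: v) ∧ ∃ μ, hEval p q hp hq m = HNNExtension.of (z (p * μ))) ∨
       (w = u ++ .T :: (m ++ .t :: v) ∧ ∃ μ, hEval p q hp hq m = HNNExtension.of (z (q * μ)))) := by
  classical
  by_cases hch : List.Chain' (fun a b : ℤˣ × Z =>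
      a.2 ∈ HNNExtension.toSubgroup (Ap p) (Ap q) a.1 → a.1 = b.1) (scan w).2
  · exfalso
    let rw0 : HNNExtension.NormalWord.ReducedWord Z (Ap p) (Ap q) := ⟨(scan w).1, (scan w).2, hch⟩
    have hprod : rw0.prod (bsphi p q hp hq) = hEval p q hp hq w := (scan_prod p q hp hq w).symm
    have hnil : rw0.toList = [] :=
      HNNExtension.ReducedWord.toList_eq_nil_of_mem_of_range (bsphi p q hp hq) rw0
        (by rw [hprod]; exact hrange)
    exact hne (scan_nil w hnil)
  · obtain ⟨L₁, A, B, L₂, hL, hR⟩ := notchain hch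
    rw [Classical.not_imp] at hR
    obtain ⟨hmem, hne2⟩ := hR
    obtain ⟨U, m, V, h1, h2, h3⟩ := scan_adj p q hp hq w L₁ A.1 A.2 B.1 B.2 L₂
      (by rw [hL])
    rcases Int.units_eq_one_or A.1 with hA | hA
    · have hB : B.1 = -1 := by
        rcases Int.units_eq_one_or B.1 with hB | hB
        · exact absurd (hA.trans hB.symm) hne2
        · exact hB
      rw [hA, HNNExtension.toSubgroup_one] at hmem
      obtain ⟨μ, hμ⟩ : (p : ℤ) ∣ Multiplicative.toAdd A.2 :=
        mem_Ap_iff.1 (show z (Multiplicative.toAdd A.2) ∈ Ap p from hmem)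
      refine ⟨U, m, V, h2, Or.inl ⟨?_, μ, ?_⟩⟩
      · rw [h1, hA, hB, ltr_one, ltr_neg_one]
      · have hA2 : A.2 = z (p * μ) := by
          rw [show A.2 = ofAdd (Multiplicative.toAdd A.2) from rfl, hμ]; rfl
        rw [h3, hA2]
    · have hB : B.1 = 1 := by
        rcases Int.units_eq_one_or B.1 with hB | hB
        · exact hB
        · exact absurd (hA.trans hB.symm) hne2
      rw [hA, HNNExtension.toSubgroup_neg_one] at hmem
      obtain ⟨μ, hμ⟩ : (q : ℤ) ∣ Multiplicative.toAdd A.2 :=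
        mem_Ap_iff.1 (show z (Multiplicative.toAdd A.2) ∈ Ap q from hmem)
      refine ⟨U, m, V, h2, Or.inr ⟨?_, μ, ?_⟩⟩
      · rw [h1, hA, hB, ltr_one, ltr_neg_one]
      · have hA2 : A.2 = z (q * μ) := by
          rw [show A.2 = ofAdd (Multiplicative.toAdd A.2) from rfl, hμ]; rfl
        rw [h3, hA2]

end Scan

end BSAux

namespace BSAux

section Key

variable (p q : ℤ) (hp : p ≠ 0) (hq : q ≠ 0)

lemma hLetter_t : hLetter p q hp hq .t = HNNExtension.t := rfl
lemma hLetter_T : hLetter p q hp hq .T = (HNNExtension.t)⁻¹ := rfl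

lemma hEval_pinch_t (x m y : List Letter) (μ : ℤ)
    (hm : hEval p q hp hq m = HNNExtension.of (z (p * μ))) :
    hEval p q hp hq (x ++ .t :: (m ++ .T :: y)) =
      hEval p q hp hq (x ++ (aPow (q * μ) ++ y)) := by
  simp only [hEval_append, hEval_cons, hLetter_t, hLetter_T]
  rw [hm, hEval_aPow, ← t_conj_hnn p q hp hq μ]
  group

lemma hEval_pinch_T (x m y : List Letter) (μ : ℤ)
    (hm : hEval p q hp hq m = HNNExtension.of (z (q * μ))) :
    hEval p q hp hq (x ++ .T :: (m ++ .t :: y)) =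
      hEval p q hp hq (x ++ (aPow (p * μ) ++ y)) := by
  simp only [hEval_append, hEval_cons, hLetter_t, hLetter_T]
  rw [hm, hEval_aPow, ← t_conj_hnn' p q hp hq μ]
  group

lemma key (n : ℕ) : ∀ (w u m v : List Letter), (tSeq w).length ≤ n →
    w = u ++ .T :: (m ++ .t :: v) → tSeq m = [] →
    hEval p q hp hq w ∈ (HNNExtension.of : Z →* H p q hp hq).range →
    (∃ μ, hEval p q hp hq m = HNNExtension.of (z (q * μ))) ∨
    (∃ u₁ y μ, u = u₁ ++ .t :: y ∧ hEval p q hp hq y = HNNExtension.of (z (p * μ))) ∨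
    (∃ y v₁ μ, v = y ++ .T :: v₁ ∧ hEval p q hp hq y = HNNExtension.of (z (p * μ))) := by
  induction n with
  | zero =>
    intro w u m v hlen hw hm hr
    exfalso
    subst hw
    rw [tSeq_append, tSeq_cons_T] at hlen
    simp at hlen
  | succ n ih =>
    intro w u m v hlen hw hm hr
    obtain ⟨u', m', v', hm', hcase⟩ := pinch p q hp hq w hr
      (by subst hw; exact tSeq_mid_ne_T)
    rcases hcase with ⟨hw', μ, hval⟩ | ⟨hw', μ, hval⟩
    · -- pinch is t-type : w = u' ++ .t :: (m' ++ .T :: v')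
      have heq : u ++ .T :: (m ++ .t :: v) = u' ++ .t :: (m' ++ .T :: v') := by
        rw [← hw, ← hw']
      rcases occ_tri heq with ⟨_, hTt, _⟩ | ⟨s, hu, hrest⟩ | ⟨s, hu', hrest⟩
      · exact absurd hTt (by simp)
      · -- u = u' ++ .t :: s, m' ++ .T :: v' = s ++ .T :: (m ++ .t :: v)
        rcases occ_tri hrest with ⟨hms, _, hvrest⟩ | ⟨s₂, hm's, hx⟩ | ⟨s₂, hs, hv'⟩
        · -- m' = s : left form directly
          subst hms
          exact Or.inr (Or.inl ⟨u', m', μ, hu, hval⟩)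
        · exact absurd (hm's ▸ hm') tSeq_mid_ne_T
        · -- s = m' ++ .T :: s₂, v' = s₂ ++ .T :: (m ++ .t :: v) : pinch inside u
          subst hs hv'
          -- w = u' ++ .t :: (m' ++ .T :: (s₂ ++ .T :: (m ++ .t :: v)))
          set Y : List Letter := s₂ ++ .T :: (m ++ .t :: v) with hY
          have hweval : hEval p q hp hq w =
              hEval p q hp hq (u' ++ (aPow (q * μ) ++ Y)) := by
            rw [hw']; exact hEval_pinch_t p q hp hq u' m' Y μ hval
          have hw₂struct : u' ++ (aPow (q * μ) ++ Y) =
              (u' ++ (aPow (q * μ) ++ s₂)) ++ .T :: (m ++ .t :: v) := by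
            simp [hY, List.append_assoc]
          have hlen₂ : (tSeq (u' ++ (aPow (q * μ) ++ Y))).length ≤ n := by
            have h1 : (tSeq w).length =
                (tSeq (u' ++ (aPow (q * μ) ++ Y))).length + 2 := by
              rw [hw']
              simp only [tSeq_append, tSeq_cons_t, tSeq_cons_T, hm', tSeq_aPow,
                List.length_append, List.length_cons, List.nil_append, List.append_nil,
                List.length_nil]
              omega
            omega
          rcases ih (u' ++ (aPow (q * μ) ++ Y)) (u' ++ (aPow (q * μ) ++ s₂)) m v hlen₂
              hw₂struct hm (by rw [← hweval]; exact hr) with h | ⟨u₁, y, μ', hu₂, hy⟩ | h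
          · exact Or.inl h
          · -- u₂ = u' ++ aPow ++ s₂ = u₁ ++ .t :: y
            have hsplit : (u' ++ aPow (q * μ)) ++ s₂ = u₁ ++ .t :: y := by
              rw [List.append_assoc]; exact hu₂
            rcases split3 (tSeq_aPow (q * μ)) (Or.inl rfl) hsplit with
              ⟨s₁, hu'eq, hyeq⟩ | ⟨s₃, hs₂eq, hu₁eq⟩
            · -- u' = u₁ ++ .t :: s₁, y = s₁ ++ aPow ++ s₂
              refine Or.inr (Or.inl ⟨u₁, s₁ ++ .t :: (m' ++ .T :: s₂), μ', ?_, ?_⟩)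
              · rw [hu, hu'eq]; simp
              · rw [hEval_pinch_t p q hp hq s₁ m' s₂ μ hval, ← List.append_assoc, ← hyeq]
                exact hy
            · -- s₂ = s₃ ++ .t :: y
              refine Or.inr (Or.inl ⟨u' ++ .t :: (m' ++ .T :: s₃), y, μ', ?_, hy⟩)
              rw [hu, hs₂eq]; simp
          · exact Or.inr (Or.inr h)
      · -- u' = u ++ .T :: s, m ++ .t :: v = s ++ .t :: (m' ++ .T :: v')
        rcases occ_tri hrest with ⟨hms, _, hvrest⟩ | ⟨s₂, hmeq, hx⟩ | ⟨s₂, hs, hv⟩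
        · -- m = s, v = m' ++ .T :: v' : right form directly
          exact Or.inr (Or.inr ⟨m', v', μ, hvrest, hval⟩)
        · exact absurd (hmeq ▸ hm) tSeq_mid_ne_t
        · -- s = m ++ .t :: s₂, v = s₂ ++ .t :: (m' ++ .T :: v') : pinch inside v
          subst hs hv
          set X : List Letter := u ++ .T :: (m ++ .t :: s₂) with hX
          have hwX : w = X ++ .t :: (m' ++ .T :: v') := by
            rw [hw', hu', hX]
          have hweval : hEval p q hp hq w =
              hEval p q hp hq (X ++ (aPow (q * μ) ++ v')) := by
            rw [hwX]; exact hEval_pinch_t p q hp hq X m' v' μ hval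
          have hw₂struct : X ++ (aPow (q * μ) ++ v') =
              u ++ .T :: (m ++ .t :: (s₂ ++ (aPow (q * μ) ++ v'))) := by
            simp [hX, List.append_assoc]
          have hlen₂ : (tSeq (X ++ (aPow (q * μ) ++ v'))).length ≤ n := by
            have h1 : (tSeq w).length =
                (tSeq (X ++ (aPow (q * μ) ++ v'))).length + 2 := by
              rw [hwX]
              simp only [tSeq_append, tSeq_cons_t, tSeq_cons_T, hm', tSeq_aPow,
                List.length_append, List.length_cons, List.nil_append, List.append_nil,
                List.length_nil]
              omega
            omega
          rcases ih (X ++ (aPow (q * μ) ++ v')) u m (s₂ ++ (aPow (q * μ) ++ v')) hlen₂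
              hw₂struct hm (by rw [← hweval]; exact hr) with h | h | ⟨y, v₁, μ', hv₂, hy⟩
          · exact Or.inl h
          · exact Or.inr (Or.inl h)
          · -- s₂ ++ aPow ++ v' = y ++ .T :: v₁
            have hsplit : (s₂ ++ aPow (q * μ)) ++ v' = y ++ .T :: v₁ := by
              rw [List.append_assoc]; exact hv₂
            rcases split3 (tSeq_aPow (q * μ)) (Or.inr rfl) hsplit with
              ⟨s₃, hs₂eq, hv₁eq⟩ | ⟨s₃, hv'eq, hyeq⟩
            · -- s₂ = y ++ .T :: s₃
              refine Or.inr (Or.inr ⟨y, s₃ ++ .t :: (m' ++ .T :: v'), μ', ?_, hy⟩)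
              rw [hs₂eq]; simp
            · -- v' = s₃ ++ .T :: v₁, y = s₂ ++ aPow ++ s₃
              refine Or.inr (Or.inr ⟨s₂ ++ .t :: (m' ++ .T :: s₃), v₁, μ', ?_, ?_⟩)
              · rw [hv'eq]; simp
              · rw [hEval_pinch_t p q hp hq s₂ m' s₃ μ hval, ← List.append_assoc, ← hyeq]
                exact hy
    · -- pinch is T-type : w = u' ++ .T :: (m' ++ .t :: v')
      have heq : u ++ .T :: (m ++ .t :: v) = u' ++ .T :: (m' ++ .t :: v') := by
        rw [← hw, ← hw']
      rcases occ_tri heq with ⟨huu', _, hrest⟩ | ⟨s, hu, hrest⟩ | ⟨s, hu', hrest⟩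
      · -- u = u', m ++ .t :: v = m' ++ .t :: v'
        rcases occ_tri hrest with ⟨hms, _, _⟩ | ⟨s₂, hmeq, _⟩ | ⟨s₂, hm'eq, _⟩
        · exact Or.inl ⟨μ, hms ▸ hval⟩
        · exact absurd (hmeq ▸ hm) tSeq_mid_ne_t
        · exact absurd (hm'eq ▸ hm') tSeq_mid_ne_t
      · -- u = u' ++ .T :: s, m' ++ .t :: v' = s ++ .T :: (m ++ .t :: v)
        rcases occ_tri hrest with ⟨_, htT, _⟩ | ⟨s₂, hm's, hx⟩ | ⟨s₂, hs, hv'⟩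
        · exact absurd htT (by simp)
        · exact absurd (hm's ▸ hm') tSeq_mid_ne_T
        · -- s = m' ++ .t :: s₂, v' = s₂ ++ .T :: (m ++ .t :: v) : pinch inside u
          subst hs hv'
          set Y : List Letter := s₂ ++ .T :: (m ++ .t :: v) with hY
          have hweval : hEval p q hp hq w =
              hEval p q hp hq (u' ++ (aPow (p * μ) ++ Y)) := by
            rw [hw']; exact hEval_pinch_T p q hp hq u' m' Y μ hval
          have hw₂struct : u' ++ (aPow (p * μ) ++ Y) =
              (u' ++ (aPow (p * μ) ++ s₂)) ++ .T :: (m ++ .t :: v) := by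
            simp [hY, List.append_assoc]
          have hlen₂ : (tSeq (u' ++ (aPow (p * μ) ++ Y))).length ≤ n := by
            have h1 : (tSeq w).length =
                (tSeq (u' ++ (aPow (p * μ) ++ Y))).length + 2 := by
              rw [hw']
              simp only [tSeq_append, tSeq_cons_t, tSeq_cons_T, hm', tSeq_aPow,
                List.length_append, List.length_cons, List.nil_append, List.append_nil,
                List.length_nil]
              omega
            omega
          rcases ih (u' ++ (aPow (p * μ) ++ Y)) (u' ++ (aPow (p * μ) ++ s₂)) m v hlen₂
              hw₂struct hm (by rw [← hweval]; exact hr) with h | ⟨u₁, y, μ', hu₂, hy⟩ | h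
          · exact Or.inl h
          · have hsplit : (u' ++ aPow (p * μ)) ++ s₂ = u₁ ++ .t :: y := by
              rw [List.append_assoc]; exact hu₂
            rcases split3 (tSeq_aPow (p * μ)) (Or.inl rfl) hsplit with
              ⟨s₁, hu'eq, hyeq⟩ | ⟨s₃, hs₂eq, hu₁eq⟩
            · refine Or.inr (Or.inl ⟨u₁, s₁ ++ .T :: (m' ++ .t :: s₂), μ', ?_, ?_⟩)
              · rw [hu, hu'eq]; simp
              · rw [hEval_pinch_T p q hp hq s₁ m' s₂ μ hval, ← List.append_assoc, ← hyeq]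
                exact hy
            · refine Or.inr (Or.inl ⟨u' ++ .T :: (m' ++ .t :: s₃), y, μ', ?_, hy⟩)
              rw [hu, hs₂eq]; simp
          · exact Or.inr (Or.inr h)
      · -- u' = u ++ .T :: s, m ++ .t :: v = s ++ .T :: (m' ++ .t :: v')
        rcases occ_tri hrest with ⟨_, htT, _⟩ | ⟨s₂, hmeq, hx⟩ | ⟨s₂, hs, hv⟩
        · exact absurd htT (by simp)
        · exact absurd (hmeq ▸ hm) tSeq_mid_ne_T
        · -- s = m ++ .t :: s₂, v = s₂ ++ .T :: (m' ++ .t :: v') : pinch inside v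
          subst hs hv
          set X : List Letter := u ++ .T :: (m ++ .t :: s₂) with hX
          have hwX : w = X ++ .T :: (m' ++ .t :: v') := by
            rw [hw', hu', hX]
          have hweval : hEval p q hp hq w =
              hEval p q hp hq (X ++ (aPow (p * μ) ++ v')) := by
            rw [hwX]; exact hEval_pinch_T p q hp hq X m' v' μ hval
          have hw₂struct : X ++ (aPow (p * μ) ++ v') =
              u ++ .T :: (m ++ .t :: (s₂ ++ (aPow (p * μ) ++ v'))) := by
            simp [hX, List.append_assoc]
          have hlen₂ : (tSeq (X ++ (aPow (p * μ) ++ v'))).length ≤ n := by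
            have h1 : (tSeq w).length =
                (tSeq (X ++ (aPow (p * μ) ++ v'))).length + 2 := by
              rw [hwX]
              simp only [tSeq_append, tSeq_cons_t, tSeq_cons_T, hm', tSeq_aPow,
                List.length_append, List.length_cons, List.nil_append, List.append_nil,
                List.length_nil]
              omega
            omega
          rcases ih (X ++ (aPow (p * μ) ++ v')) u m (s₂ ++ (aPow (p * μ) ++ v')) hlen₂
              hw₂struct hm (by rw [← hweval]; exact hr) with h | h | ⟨y, v₁, μ', hv₂, hy⟩
          · exact Or.inl h
          · exact Or.inr (Or.inl h)
          · have hsplit : (s₂ ++ aPow (p * μ)) ++ v' = y ++ .T :: v₁ := by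
              rw [List.append_assoc]; exact hv₂
            rcases split3 (tSeq_aPow (p * μ)) (Or.inr rfl) hsplit with
              ⟨s₃, hs₂eq, hv₁eq⟩ | ⟨s₃, hv'eq, hyeq⟩
            · refine Or.inr (Or.inr ⟨y, s₃ ++ .T :: (m' ++ .t :: v'), μ', ?_, hy⟩)
              rw [hs₂eq]; simp
            · refine Or.inr (Or.inr ⟨s₂ ++ .T :: (m' ++ .t :: s₃), v₁, μ', ?_, ?_⟩)
              · rw [hv'eq]; simp
              · rw [hEval_pinch_T p q hp hq s₂ m' s₃ μ hval, ← List.append_assoc, ← hyeq]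
                exact hy

end Key

end BSAux

namespace BSAux

section Count

variable (p q : ℤ) (hp : p ≠ 0) (hq : q ≠ 0)

def eps : H p q hp hq →* Z :=
  HNNExtension.lift (1 : Z →* Z) (z 1) (by intro a; simp)

lemma eps_of (g : Z) : eps p q hp hq (HNNExtension.of g) = 1 := by
  rw [eps, HNNExtension.lift_of]; rfl

lemma eps_t : eps p q hp hq HNNExtension.t = z 1 := by
  rw [eps, HNNExtension.lift_t]

lemma eps_hEval (w : List Letter) :
    eps p q hp hq (hEval p q hp hq w) = z ((w.count .t : ℤ) - (w.count .T : ℤ)) := by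
  induction w with
  | nil => rw [hEval_nil, map_one]; norm_num; rfl
  | cons c r ih =>
    rw [hEval_cons, map_mul, ih]
    cases c with
    | a =>
      rw [show hLetter p q hp hq .a = HNNExtension.of (z 1) from rfl, eps_of, one_mul]
      have h1 : List.count Letter.t (Letter.a :: r) = List.count Letter.t r := by
        simp [List.count_cons]
      have h2 : List.count Letter.T (Letter.a :: r) = List.count Letter.T r := by
        simp [List.count_cons]
      rw [h1, h2]
    | A =>
      rw [show hLetter p q hp hq .A = (HNNExtension.of (z 1))⁻¹ from rfl, map_inv, eps_of,
        inv_one, one_mul]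
      have h1 : List.count Letter.t (Letter.A :: r) = List.count Letter.t r := by
        simp [List.count_cons]
      have h2 : List.count Letter.T (Letter.A :: r) = List.count Letter.T r := by
        simp [List.count_cons]
      rw [h1, h2]
    | t =>
      rw [hLetter_t, eps_t, z_mul]
      have h1 : List.count Letter.t (Letter.t :: r) = List.count Letter.t r + 1 := by
        simp [List.count_cons]
      have h2 : List.count Letter.T (Letter.t :: r) = List.count Letter.T r := by
        simp [List.count_cons]
      rw [h1, h2]
      congr 1
      push_cast
      ring
    | T =>
      rw [hLetter_T, map_inv, eps_t, show (z 1)⁻¹ = z (-1) from rfl, z_mul]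
      have h1 : List.count Letter.t (Letter.T :: r) = List.count Letter.t r := by
        simp [List.count_cons]
      have h2 : List.count Letter.T (Letter.T :: r) = List.count Letter.T r + 1 := by
        simp [List.count_cons]
      rw [h1, h2]
      congr 1
      push_cast
      ring

lemma count_eq (w : List Letter) (α : ℤ)
    (h : hEval p q hp hq w = HNNExtension.of (z α)) : w.count .t = w.count .T := by
  have h1 := eps_hEval p q hp hq w
  rw [h, eps_of] at h1
  have h2 : ((w.count .t : ℤ) - (w.count .T : ℤ)) = 0 := by
    have := z_inj (show z ((w.count .t : ℤ) - w.count .T) = z 0 from h1.symm)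
    exact this
  omega

end Count

section Shorten

variable (p q : ℤ)

lemma hpne (hp1 : 1 ≤ p) (hpq : p < q) : p ≠ 0 := by omega
lemma hqne (hp1 : 1 ≤ p) (hpq : p < q) : q ≠ 0 := by omega

lemma eval_aPow (hp1 : 1 ≤ p) (hpq : p < q) (γ : ℤ) : eval p q (aPow γ) = aBS p q ^ γ :=
  pull p q (hpne p q hp1 hpq) (hqne p q hp1 hpq) (aPow γ) γ
    (hEval_aPow p q (hpne p q hp1 hpq) (hqne p q hp1 hpq) γ)

lemma evalLetter_t : evalLetter p q .t = tBS p q := rfl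
lemma evalLetter_T : evalLetter p q .T = (tBS p q)⁻¹ := rfl

-- no a a⁻¹ / a⁻¹ a factors in geodesics
lemma geo_noadj (w : List Letter) (hgeo : Geodesic p q w) :
    (∀ u v, w ≠ u ++ .a :: .A :: v) ∧ (∀ u v, w ≠ u ++ .A :: .a :: v) := by
  constructor
  · intro u v hw
    have heval : eval p q (u ++ v) = eval p q w := by
      rw [hw, eval_append, eval_append, eval_cons, eval_cons]
      congr 1
      rw [show evalLetter p q .a = aBS p q from rfl, show evalLetter p q .A = (aBS p q)⁻¹ from rfl]
      rw [mul_inv_cancel_left]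
    have := hgeo _ heval
    rw [hw] at this
    simp [List.length_append] at this
  · intro u v hw
    have heval : eval p q (u ++ v) = eval p q w := by
      rw [hw, eval_append, eval_append, eval_cons, eval_cons]
      congr 1
      rw [show evalLetter p q .a = aBS p q from rfl, show evalLetter p q .A = (aBS p q)⁻¹ from rfl]
      rw [inv_mul_cancel_left]
    have := hgeo _ heval
    rw [hw] at this
    simp [List.length_append] at this

lemma zpow_comm (γ δ : ℤ) : aBS p q ^ γ * aBS p q ^ δ = aBS p q ^ δ * aBS p q ^ γ := by
  rw [← zpow_add, ← zpow_add, add_comm]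

-- no T a^{qμ} t factors in geodesics
lemma geo_noTpinch (hp1 : 1 ≤ p) (hpq : p < q) (w u m v : List Letter) (μ : ℤ) (hgeo : Geodesic p q w)
    (hw : w = u ++ .T :: (m ++ .t :: v)) (hm : tSeq m = [])
    (hval : hEval p q (hpne p q hp1 hpq) (hqne p q hp1 hpq) m = HNNExtension.of (z (q * μ))) :
    False := by
  have hpne' := hpne p q hp1 hpq
  have hqne' := hqne p q hp1 hpq
  have hevalm : eval p q m = aBS p q ^ (q * μ) := pull p q hpne' hqne' m _ hval
  obtain ⟨γ, hγb, hγv⟩ := tfree_val p q hpne' hqne' m hm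
  have hγ : γ = q * μ := by
    have := HNNExtension.of_injective (bsphi p q hpne' hqne') (hγv.symm.trans hval)
    exact z_inj this
  have heval : eval p q (u ++ (aPow (p * μ) ++ v)) = eval p q w := by
    rw [hw, eval_append, eval_append, eval_append, eval_cons, eval_append, eval_cons,
      eval_aPow p q hp1 hpq _, hevalm, evalLetter_t, evalLetter_T]
    congr 1
    have hid : (tBS p q)⁻¹ * (aBS p q ^ (q * μ) * (tBS p q * eval p q v)) =
        ((tBS p q)⁻¹ * aBS p q ^ (q * μ) * tBS p q) * eval p q v := by group
    rw [hid, ← relator_pow p q μ]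
    group
  have hlen := hgeo _ heval
  rw [hw] at hlen
  simp only [List.length_append, List.length_cons, aPow_length] at hlen
  have h1 : (p * μ).natAbs ≤ (q * μ).natAbs := by
    rw [Int.natAbs_mul, Int.natAbs_mul]
    have : p.natAbs ≤ q.natAbs := by omega
    exact Nat.mul_le_mul_right _ this
  omega

-- no  t y T m t  with value(y) ∈ pℤ in geodesics
lemma geo_noleft (hp1 : 1 ≤ p) (hpq : p < q) (w u₁ y m v : List Letter) (μ : ℤ) (hgeo : Geodesic p q w)
    (hw : w = u₁ ++ .t :: (y ++ .T :: (m ++ .t :: v))) (hm : tSeq m = [])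
    (hy : hEval p q (hpne p q hp1 hpq) (hqne p q hp1 hpq) y = HNNExtension.of (z (p * μ))) :
    False := by
  have hpne' := hpne p q hp1 hpq
  have hqne' := hqne p q hp1 hpq
  have hevaly : eval p q y = aBS p q ^ (p * μ) := pull p q hpne' hqne' y _ hy
  obtain ⟨γ, hγb, hγv⟩ := tfree_val p q hpne' hqne' m hm
  have hevalm : eval p q m = aBS p q ^ γ := pull p q hpne' hqne' m _ hγv
  have heval : eval p q (u₁ ++ (m ++ .t :: (y ++ v))) = eval p q w := by
    rw [hw]
    simp only [eval_append, eval_cons, evalLetter_t, evalLetter_T, hevaly, hevalm]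
    congr 1
    have h1 : tBS p q * (aBS p q ^ (p * μ) * ((tBS p q)⁻¹ * (aBS p q ^ γ * (tBS p q * eval p q v)))) =
        (tBS p q * aBS p q ^ (p * μ) * (tBS p q)⁻¹) * aBS p q ^ γ * tBS p q * eval p q v := by
      group
    have h2 : aBS p q ^ γ * (tBS p q * (aBS p q ^ (p * μ) * eval p q v)) =
        aBS p q ^ γ * (tBS p q * aBS p q ^ (p * μ)) * eval p q v := by group
    rw [h2, h1, relator_pow p q μ, relator_pow' p q μ, ← mul_assoc, zpow_comm p q (q*μ) γ]
  have hlen := hgeo _ heval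
  rw [hw] at hlen
  simp only [List.length_append, List.length_cons] at hlen
  omega

-- no  T m t y T  with value(y) ∈ pℤ in geodesics
lemma geo_noright (hp1 : 1 ≤ p) (hpq : p < q) (w u m y v₁ : List Letter) (μ : ℤ) (hgeo : Geodesic p q w)
    (hw : w = u ++ .T :: (m ++ .t :: (y ++ .T :: v₁))) (hm : tSeq m = [])
    (hy : hEval p q (hpne p q hp1 hpq) (hqne p q hp1 hpq) y = HNNExtension.of (z (p * μ))) :
    False := by
  have hpne' := hpne p q hp1 hpq
  have hqne' := hqne p q hp1 hpq
  have hevaly : eval p q y = aBS p q ^ (p * μ) := pull p q hpne' hqne' y _ hy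
  obtain ⟨γ, hγb, hγv⟩ := tfree_val p q hpne' hqne' m hm
  have hevalm : eval p q m = aBS p q ^ γ := pull p q hpne' hqne' m _ hγv
  have heval : eval p q (u ++ (y ++ .T :: (m ++ v₁))) = eval p q w := by
    rw [hw]
    simp only [eval_append, eval_cons, evalLetter_t, evalLetter_T, hevaly, hevalm]
    congr 1
    have h1 : (tBS p q)⁻¹ * (aBS p q ^ γ * (tBS p q * (aBS p q ^ (p * μ) * ((tBS p q)⁻¹ * eval p q v₁)))) =
        (tBS p q)⁻¹ * aBS p q ^ γ * (tBS p q * aBS p q ^ (p * μ) * (tBS p q)⁻¹) * eval p q v₁ := by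
      group
    have h2 : aBS p q ^ (p * μ) * ((tBS p q)⁻¹ * (aBS p q ^ γ * eval p q v₁)) =
        (aBS p q ^ (p * μ) * (tBS p q)⁻¹) * aBS p q ^ γ * eval p q v₁ := by group
    rw [h2, h1, relator_pow p q μ, relator_pow'' p q μ]
    have h3 : (tBS p q)⁻¹ * aBS p q ^ γ * aBS p q ^ (q * μ) =
        (tBS p q)⁻¹ * aBS p q ^ (q * μ) * aBS p q ^ γ := by
      rw [mul_assoc, mul_assoc, zpow_comm]
    rw [h3]
  have hlen := hgeo _ heval
  rw [hw] at hlen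
  simp only [List.length_append, List.length_cons] at hlen
  omega

end Shorten

end BSAux

namespace BSAux

section Final

lemma tSeq_mem (w : List Letter) : ∀ c ∈ tSeq w, c = .t ∨ c = .T := by
  intro c hc
  rw [tSeq, List.mem_filter] at hc
  rcases hc with ⟨_, h⟩
  cases c <;> simp_all

lemma mountain_or_valley : ∀ s : List Letter, (∀ c ∈ s, c = .t ∨ c = .T) →
    (∃ j k, s = List.replicate j .t ++ List.replicate k .T) ∨
    (∃ s₁ s₂, s = s₁ ++ .T :: .t :: s₂) := by
  intro s
  induction s with
  | nil => exact fun _ => Or.inl ⟨0, 0, rfl⟩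
  | cons c r ih =>
    intro hmem
    rcases ih (fun c hc => hmem c (List.mem_cons_of_mem _ hc)) with ⟨j, k, hr⟩ | ⟨s₁, s₂, hr⟩
    · rcases hmem c List.mem_cons_self with rfl | rfl
      · exact Or.inl ⟨j + 1, k, by rw [hr, List.replicate_succ]; rfl⟩
      · cases j with
        | zero => exact Or.inl ⟨0, k + 1, by rw [hr]; simp [List.replicate_succ]⟩
        | succ j' =>
          refine Or.inr ⟨[], List.replicate j' .t ++ List.replicate k .T, ?_⟩
          rw [hr, List.replicate_succ]; rfl
    · exact Or.inr ⟨c :: s₁, s₂, by rw [hr]; rfl⟩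

lemma na_factor (c d : Letter) (w L x R : List Letter) (hw : w = L ++ (x ++ R))
    (h : ∀ u v, w ≠ u ++ c :: d :: v) : ∀ u v, x ≠ u ++ c :: d :: v := by
  intro u v hx
  exact h (L ++ u) (v ++ R) (by rw [hw, hx]; simp)

lemma pure_rep (m : List Letter) (htf : tSeq m = [])
    (h1 : ∀ u v, m ≠ u ++ .a :: .A :: v) (h2 : ∀ u v, m ≠ u ++ .A :: .a :: v) :
    m = List.replicate m.length .a ∨ m = List.replicate m.length .A := by
  induction m with
  | nil => exact Or.inl rfl
  | cons c r ih =>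
    have h1' : ∀ u v, r ≠ u ++ .a :: .A :: v := fun u v hr => h1 (c :: u) v (by rw [hr]; rfl)
    have h2' : ∀ u v, r ≠ u ++ .A :: .a :: v := fun u v hr => h2 (c :: u) v (by rw [hr]; rfl)
    cases c with
    | t => rw [tSeq_cons_t] at htf; simp at htf
    | T => rw [tSeq_cons_T] at htf; simp at htf
    | a =>
      rw [tSeq_cons_a] at htf
      rcases ih htf h1' h2' with hr | hr
      · exact Or.inl (by rw [List.length_cons, List.replicate_succ]; exact congrArg _ hr)
      · cases r with
        | nil => exact Or.inl rfl
        | cons d r' =>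
          exfalso
          have hd : d = .A := by
            rw [List.length_cons, List.replicate_succ] at hr
            exact (List.cons_eq_cons.1 hr).1
          exact h1 [] r' (by rw [hd]; rfl)
    | A =>
      rw [tSeq_cons_A] at htf
      rcases ih htf h1' h2' with hr | hr
      · cases r with
        | nil => exact Or.inr rfl
        | cons d r' =>
          exfalso
          have hd : d = .a := by
            rw [List.length_cons, List.replicate_succ] at hr
            exact (List.cons_eq_cons.1 hr).1
          exact h2 [] r' (by rw [hd]; rfl)
      · exact Or.inr (by rw [List.length_cons, List.replicate_succ]; exact congrArg _ hr)

lemma aPow_natCast (n : ℕ) : aPow (n : ℤ) = List.replicate n .a := by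
  rw [aPow, if_pos (Int.natCast_nonneg n)]
  simp

lemma aPow_neg_natCast (n : ℕ) : aPow (-(n : ℤ)) = List.replicate n .A := by
  cases n with
  | zero => rw [show -((0:ℕ):ℤ) = 0 by simp, aPow]; simp
  | succ k =>
    rw [aPow, if_neg (by omega)]
    congr 1 <;> omega

lemma pure (m : List Letter) (htf : tSeq m = [])
    (h1 : ∀ u v, m ≠ u ++ .a :: .A :: v) (h2 : ∀ u v, m ≠ u ++ .A :: .a :: v) :
    ∃ γ, m = aPow γ := by
  rcases pure_rep m htf h1 h2 with hm | hm
  · exact ⟨(m.length : ℤ), by rw [aPow_natCast]; exact hm⟩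
  · exact ⟨-(m.length : ℤ), by rw [aPow_neg_natCast]; exact hm⟩

lemma shape : ∀ (k : ℕ) (w : List Letter),
    tSeq w = List.replicate k .t ++ List.replicate k .T →
    (∀ u v, w ≠ u ++ .a :: .A :: v) → (∀ u v, w ≠ u ++ .A :: .a :: v) →
    ∃ (βs αs : Fin k → ℤ) (α0 : ℤ),
      w = (List.ofFn fun i : Fin k => aPow (βs i) ++ [Letter.t]).flatten ++ aPow α0 ++
          (List.ofFn fun i : Fin k => Letter.T :: aPow (αs i)).flatten := by
  intro k
  induction k with
  | zero =>
    intro w h hna1 hna2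
    obtain ⟨γ, hγ⟩ := pure w (by simpa using h) hna1 hna2
    exact ⟨(fun i => i.elim0), (fun i => i.elim0), γ, by simp [hγ]⟩
  | succ k ih =>
    intro w h hna1 hna2
    have h' : tSeq w = [] ++ .t :: (List.replicate k .t ++ List.replicate (k + 1) .T) := by
      rw [h, List.replicate_succ]; rfl
    obtain ⟨b, w₁, hw1, htb, htw₁⟩ := filter_split h'
    have h'' : tSeq w₁ = (List.replicate k .t ++ List.replicate k .T) ++ .T :: [] := by
      rw [htw₁, List.replicate_succ']
      simp [List.append_assoc]
    obtain ⟨w₂, b', hw2, htw₂, htb'⟩ := filter_split h''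
    have hw : w = b ++ (.t :: (w₂ ++ (.T :: b'))) := by rw [hw1, hw2]
    have hwL1 : w = [] ++ (b ++ (Letter.t :: (w₂ ++ (Letter.T :: b')))) := by rw [hw]; simp
    have hwL2 : w = (b ++ [Letter.t]) ++ (w₂ ++ (Letter.T :: b')) := by rw [hw]; simp
    have hwL3 : w = (b ++ Letter.t :: w₂ ++ [Letter.T]) ++ (b' ++ []) := by rw [hw]; simp
    obtain ⟨β, hb⟩ := pure b htb
      (na_factor _ _ w [] b _ hwL1 hna1) (na_factor _ _ w [] b _ hwL1 hna2)
    obtain ⟨α', hb'⟩ := pure b' htb'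
      (na_factor _ _ w _ b' [] hwL3 hna1) (na_factor _ _ w _ b' [] hwL3 hna2)
    obtain ⟨βs', αs', α0, hw₂shape⟩ := ih w₂ htw₂
      (na_factor _ _ w _ w₂ _ hwL2 hna1) (na_factor _ _ w _ w₂ _ hwL2 hna2)
    refine ⟨(Fin.cons β βs' : Fin (k+1) → ℤ), (Fin.snoc αs' α' : Fin (k+1) → ℤ), α0, ?_⟩
    have hβ : (List.ofFn fun i : Fin (k + 1) => aPow ((Fin.cons β βs' : Fin (k+1) → ℤ) i) ++ [Letter.t]).flatten
        = (aPow β ++ [Letter.t]) ++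
          (List.ofFn fun i : Fin k => aPow (βs' i) ++ [Letter.t]).flatten := by
      rw [List.ofFn_succ]
      simp [Fin.cons_zero, Fin.cons_succ]
    have hα : (List.ofFn fun i : Fin (k + 1) =>
          Letter.T :: aPow ((Fin.snoc αs' α' : Fin (k+1) → ℤ) i)).flatten
        = (List.ofFn fun i : Fin k => Letter.T :: aPow (αs' i)).flatten ++
          (Letter.T :: aPow α') := by
      rw [List.ofFn_succ']
      simp [Fin.snoc_castSucc, Fin.snoc_last, List.concat_eq_append, List.flatten_append]
    rw [hβ, hα, hw, hb, hb', hw₂shape]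
    simp [List.append_assoc]

lemma count_tseq_t (w : List Letter) : (tSeq w).count .t = w.count .t :=
  List.count_filter (by rfl)

lemma count_tseq_T (w : List Letter) : (tSeq w).count .T = w.count .T :=
  List.count_filter (by rfl)

end Final

end BSAux

theorem geodesic_horocyclic_shape (p q α : ℤ) (hp : 1 ≤ p) (hpq : p < q)
    (w : List Letter) (hrep : eval p q w = eval p q (aPow α)) (hgeo : Geodesic p q w) :
    ∃ (k : ℕ) (βs αs : Fin k → ℤ) (α0 : ℤ),
      w = (List.ofFn fun i : Fin k => aPow (βs i) ++ [Letter.t]).flatten ++ aPow α0 ++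
          (List.ofFn fun i : Fin k => Letter.T :: aPow (αs i)).flatten ∧
      tSeq w = List.replicate k Letter.t ++ List.replicate k Letter.T := by
  classical
  have hpne' : p ≠ 0 := by omega
  have hqne' : q ≠ 0 := by omega
  have hrange : BSAux.hEval p q hpne' hqne' w = HNNExtension.of (BSAux.z α) := by
    rw [← BSAux.psi_eval, hrep, BSAux.psi_eval, BSAux.hEval_aPow]
  have hmem : BSAux.hEval p q hpne' hqne' w ∈
      (HNNExtension.of : BSAux.Z →* BSAux.H p q hpne' hqne').range := ⟨BSAux.z α, hrange.symm⟩
  obtain ⟨hna1, hna2⟩ := BSAux.geo_noadj p q w hgeo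
  have hnoval : ∀ u m v : List Letter,
      w = u ++ Letter.T :: (m ++ Letter.t :: v) → tSeq m = [] → False := by
    intro u m v hw hm
    rcases BSAux.key p q hpne' hqne' (tSeq w).length w u m v le_rfl hw hm hmem with
      ⟨μ, hval⟩ | ⟨u₁, y, μ, hu, hy⟩ | ⟨y, v₁, μ, hv, hy⟩
    · exact BSAux.geo_noTpinch p q hp hpq w u m v μ hgeo hw hm hval
    · exact BSAux.geo_noleft p q hp hpq w u₁ y m v μ hgeo (by rw [hw, hu]; simp) hm hy
    · exact BSAux.geo_noright p q hp hpq w u m y v₁ μ hgeo (by rw [hw, hv]) hm hy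
  rcases BSAux.mountain_or_valley (tSeq w) (BSAux.tSeq_mem w) with ⟨j, k, hjk⟩ | ⟨s₁, s₂, hvly⟩
  · have hcnt := BSAux.count_eq p q hpne' hqne' w α hrange
    have e1 : w.count Letter.t = j := by
      rw [← BSAux.count_tseq_t, hjk]
      simp [List.count_append, List.count_replicate_self, List.count_replicate]
    have e2 : w.count Letter.T = k := by
      rw [← BSAux.count_tseq_T, hjk]
      simp [List.count_append, List.count_replicate_self, List.count_replicate]
    have hjk2 : j = k := by omega
    subst hjk2
    obtain ⟨βs, αs, α0, hsh⟩ := BSAux.shape j w hjk hna1 hna2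
    exact ⟨j, βs, αs, α0, hsh, hjk⟩
  · exfalso
    have hvly' : tSeq w = s₁ ++ Letter.T :: (Letter.t :: s₂) := by rw [hvly]
    obtain ⟨u0, v0, hw0, _, htv0⟩ := BSAux.filter_split hvly'
    have htv0' : tSeq v0 = [] ++ Letter.t :: s₂ := by rw [htv0]; rfl
    obtain ⟨m, v, hv0, htm, _⟩ := BSAux.filter_split htv0'
    exact hnoval u0 m v (by rw [hw0, hv0]) htm
end

section
/- Let p, q be integers with 1 ≤ p < q and let α ∈ ℤ. Then there exists a geodesic word representing a^α in BS(p,q) of the form t^k a^{α_0} t⁻¹ a^{γ_1} t⁻¹ ⋯ t⁻¹ a^{γ_k} (all letters t at the front), and there also exists a geodesic word representing a^α of the form a^{γ_k} t ⋯ a^{γ_1} t a^{α_0} (t⁻¹)^k (all letters t⁻¹ at the end), for suitable k ≥ 0 and integers α_0, γ_1, …, γ_k. -/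
namespace BSW

variable (p q : ℤ)

/-- generator `a` of `BS p q`. -/
def aa : BS p q := PresentedGroup.of false
/-- generator `t` of `BS p q`. -/
def tb : BS p q := PresentedGroup.of true

lemma rel1 : tb p q * (aa p q) ^ p * (tb p q)⁻¹ = (aa p q) ^ q := by
  have hmem : (FreeGroup.of true * (FreeGroup.of false) ^ p * (FreeGroup.of true)⁻¹ *
      (FreeGroup.of false) ^ (-q)) ∈ Subgroup.normalClosure (bsRel p q) :=
    Subgroup.subset_normalClosure rfl
  have h1 : PresentedGroup.mk (bsRel p q) (FreeGroup.of true * (FreeGroup.of false) ^ p *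
      (FreeGroup.of true)⁻¹ * (FreeGroup.of false) ^ (-q)) = 1 :=
    (QuotientGroup.eq_one_iff _).2 hmem
  have h2 : tb p q * (aa p q) ^ p * (tb p q)⁻¹ * ((aa p q) ^ q)⁻¹ = 1 := by
    simpa [map_mul, map_zpow, map_inv, zpow_neg, tb, aa, PresentedGroup.of] using h1
  exact mul_inv_eq_one.mp h2

lemma rel_zpow (b : ℤ) : tb p q * (aa p q) ^ (p * b) * (tb p q)⁻¹ = (aa p q) ^ (q * b) := by
  have h := rel1 p q
  have h2 : (MulAut.conj (tb p q)) ((aa p q) ^ p) = (aa p q) ^ q := by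
    simpa [MulAut.conj_apply] using h
  have h3 : (MulAut.conj (tb p q)) (((aa p q) ^ p) ^ b) = ((aa p q) ^ q) ^ b := by
    rw [map_zpow, h2]
  simpa [MulAut.conj_apply, ← zpow_mul] using h3

lemma eval_nil : eval p q [] = 1 := rfl

lemma eval_cons (c : Letter) (w : List Letter) :
    eval p q (c :: w) = evalLetter p q c * eval p q w := by
  simp [eval]

lemma eval_append (u v : List Letter) :
    eval p q (u ++ v) = eval p q u * eval p q v := by
  simp [eval]

lemma eval_singleton (c : Letter) : eval p q [c] = evalLetter p q c := by
  simp [eval]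

lemma eval_replicate_a (n : ℕ) :
    eval p q (List.replicate n Letter.a) = (aa p q) ^ (n : ℤ) := by
  simp [eval, List.map_replicate, List.prod_replicate, evalLetter, aa, zpow_natCast]

lemma eval_replicate_A (n : ℕ) :
    eval p q (List.replicate n Letter.A) = (aa p q) ^ (-(n : ℤ)) := by
  simp [eval, List.map_replicate, List.prod_replicate, evalLetter, aa, zpow_natCast,
    inv_pow, zpow_neg]

lemma eval_aPow (α : ℤ) : eval p q (aPow α) = (aa p q) ^ α := by
  unfold aPow
  split
  · rename_i h
    rw [eval_replicate_a, Int.toNat_of_nonneg h]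
  · rename_i h
    rw [eval_replicate_A, Int.toNat_of_nonneg (by omega)]
    congr 1
    omega

lemma len_aPow (α : ℤ) : (aPow α).length = α.natAbs := by
  unfold aPow
  split <;> simp <;> omega

/-! ### word inversion -/

def linv : Letter → Letter
  | .a => .A
  | .A => .a
  | .t => .T
  | .T => .t

def winv (w : List Letter) : List Letter := (w.map linv).reverse

lemma winv_nil : winv [] = [] := rfl

lemma winv_cons (c : Letter) (w : List Letter) :
    winv (c :: w) = winv w ++ [linv c] := by
  simp [winv]

lemma winv_append (u v : List Letter) : winv (u ++ v) = winv v ++ winv u := by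
  simp [winv]

lemma winv_length (w : List Letter) : (winv w).length = w.length := by
  simp [winv]

lemma evalLetter_linv (c : Letter) :
    evalLetter p q (linv c) = (evalLetter p q c)⁻¹ := by
  cases c <;> simp [linv, evalLetter]

lemma eval_winv (w : List Letter) : eval p q (winv w) = (eval p q w)⁻¹ := by
  induction w with
  | nil => simp [winv, eval]
  | cons c w ih =>
      rw [winv_cons, eval_append, ih, eval_cons p q c w, eval_cons, eval_nil, evalLetter_linv,
        mul_one, mul_inv_rev]

lemma winv_replicate_t (k : ℕ) :
    winv (List.replicate k Letter.t) = List.replicate k Letter.T := by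
  simp [winv, List.map_replicate, List.reverse_replicate, linv]

lemma winv_aPow (g : ℤ) : winv (aPow g) = aPow (-g) := by
  unfold aPow
  rcases lt_trichotomy g 0 with h | h | h
  · rw [if_neg (by omega), if_pos (by omega)]
    simp [winv, List.map_replicate, List.reverse_replicate, linv]
  · subst h; simp [winv]
  · rw [if_pos (by omega), if_neg (by omega)]
    simp [winv, List.map_replicate, List.reverse_replicate, linv]

/-! ### The HNN extension model -/

abbrev MZ := Multiplicative ℤ

def mz (n : ℤ) : MZ := Multiplicative.ofAdd n

lemma mz_injective : Function.Injective mz := fun _ _ h => h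

lemma mz_mul (m n : ℤ) : mz m * mz n = mz (m + n) := rfl

lemma mz_zpow (n k : ℤ) : (mz n) ^ k = mz (k * n) := by
  rw [mz, mz, ← ofAdd_zsmul, smul_eq_mul]

lemma mem_zpowers_iff_dvd (n g : ℤ) :
    mz g ∈ Subgroup.zpowers (mz n) ↔ n ∣ g := by
  constructor
  · rintro ⟨k, hk⟩
    have hk' : mz n ^ k = mz g := hk
    rw [mz_zpow] at hk'
    exact ⟨k, by rw [mul_comm]; exact (mz_injective hk').symm⟩
  · rintro ⟨c, hc⟩
    refine ⟨c, ?_⟩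
    show mz n ^ c = mz g
    rw [mz_zpow, hc, mul_comm]

/-- the subgroup `⟨n⟩` of `Multiplicative ℤ` is isomorphic to `Multiplicative ℤ`. -/
def zpEquiv (n : ℤ) (hn : n ≠ 0) : MZ ≃* Subgroup.zpowers (mz n) where
  toFun x := ⟨mz (n * x.toAdd), ⟨x.toAdd, by show mz n ^ x.toAdd = mz (n * x.toAdd); rw [mz_zpow, mul_comm]⟩⟩
  invFun a := Multiplicative.ofAdd (a.val.toAdd / n)
  left_inv x := by
    have h1 : n * x.toAdd / n = x.toAdd := Int.mul_ediv_cancel_left _ hn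
    have h2 : x.toAdd * n / n = x.toAdd := Int.mul_ediv_cancel _ hn
    simp only [mz]
    simp [h1, h2]
  right_inv a := by
    obtain ⟨k, hk⟩ := a.2
    have hk' : mz n ^ k = a.val := hk
    have hval : a.val.toAdd = k * n := by
      rw [← hk', mz_zpow]; rfl
    have h3 : a.val.toAdd / n = k := by
      rw [hval]; exact Int.mul_ediv_cancel _ hn
    apply Subtype.ext
    show mz (n * (Multiplicative.ofAdd (a.val.toAdd / n)).toAdd) = a.val
    rw [toAdd_ofAdd, h3, ← hk', mz_zpow]
    congr 1
    ring
  map_mul' x y := by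
    apply Subtype.ext
    simp only [Subgroup.coe_mul]
    rw [mz, mz, mz, ← ofAdd_add]
    congr 1
    simp [mul_add]

variable (hp : 1 ≤ p) (hpq : p < q)

def Asub : Subgroup MZ := Subgroup.zpowers (mz p)
def Bsub : Subgroup MZ := Subgroup.zpowers (mz q)

noncomputable def phiAB : (Asub p) ≃* (Bsub q) :=
  ((zpEquiv p (by omega)).symm.trans (zpEquiv q (by omega)) : (Asub p) ≃* (Bsub q))

lemma memA (b : ℤ) : mz (p * b) ∈ Asub p := by
  rw [Asub, mem_zpowers_iff_dvd]; exact ⟨b, rfl⟩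

lemma memB (b : ℤ) : mz (q * b) ∈ Bsub q := by
  rw [Bsub, mem_zpowers_iff_dvd]; exact ⟨b, rfl⟩

lemma phiAB_apply (b : ℤ) (h : mz (p * b) ∈ Asub p) :
    ((phiAB p q hp hpq ⟨mz (p * b), h⟩ : Bsub q) : MZ) = mz (q * b) := by
  have hp0 : p ≠ 0 := by omega
  have hq0 : q ≠ 0 := by omega
  have h1 : (zpEquiv p hp0).symm ⟨mz (p * b), h⟩ = Multiplicative.ofAdd b := by
    apply (zpEquiv p hp0).injective
    rw [MulEquiv.apply_symm_apply]
    apply Subtype.ext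
    show mz (p * b) = mz (p * (Multiplicative.ofAdd b).toAdd)
    rw [toAdd_ofAdd]
  have h2 : (((zpEquiv q hq0) (Multiplicative.ofAdd b) : Bsub q) : MZ) = mz (q * b) := by
    show mz (q * (Multiplicative.ofAdd b).toAdd) = mz (q * b)
    rw [toAdd_ofAdd]
  show (((zpEquiv q hq0) ((zpEquiv p hp0).symm ⟨mz (p * b), h⟩) : Bsub q) : MZ) = mz (q * b)
  rw [h1, h2]

abbrev HH := HNNExtension MZ (Asub p) (Bsub q) (phiAB p q hp hpq)

lemma key_hnn : (HNNExtension.t : HH p q hp hpq) * HNNExtension.of (mz p) =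
    HNNExtension.of (mz q) * HNNExtension.t := by
  have h := HNNExtension.t_mul_of (φ := phiAB p q hp hpq) ⟨mz p, by simpa using memA p 1⟩
  have h2 : ((phiAB p q hp hpq ⟨mz p, by simpa using memA p 1⟩ : Bsub q) : MZ) = mz q := by
    have := phiAB_apply p q hp hpq 1 (by simpa using memA p 1)
    simpa using this
  rw [h2] at h
  exact h

lemma lift_cond : ∀ r ∈ bsRel p q,
    FreeGroup.lift (fun x => if x then (HNNExtension.t : HH p q hp hpq)
      else HNNExtension.of (mz 1)) r = 1 := by
  intro r hr
  have hr' : r = FreeGroup.of true * (FreeGroup.of false) ^ p * (FreeGroup.of true)⁻¹ *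
      (FreeGroup.of false) ^ (-q) := hr
  subst hr'
  have e1 : ((HNNExtension.of (mz 1) : HH p q hp hpq)) ^ p = HNNExtension.of (mz p) := by
    rw [← map_zpow, mz_zpow, mul_one]
  have e2 : ((HNNExtension.of (mz 1) : HH p q hp hpq)) ^ (-q) = (HNNExtension.of (mz q))⁻¹ := by
    rw [zpow_neg, ← map_zpow, mz_zpow, mul_one]
  simp only [map_mul, map_zpow, map_inv, FreeGroup.lift_apply_of, if_pos, if_true, if_false,
    Bool.false_eq_true, ite_false, ite_true]
  rw [e1, e2]
  rw [mul_assoc (HNNExtension.t * HNNExtension.of (mz p))]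
  rw [key_hnn p q hp hpq]
  group

noncomputable def Phi : BS p q →* HH p q hp hpq :=
  PresentedGroup.toGroup (lift_cond p q hp hpq)

lemma Phi_tb : Phi p q hp hpq (tb p q) = HNNExtension.t := by
  rw [tb, Phi, PresentedGroup.toGroup.of]; rfl

lemma Phi_aa : Phi p q hp hpq (aa p q) = HNNExtension.of (mz 1) := by
  rw [aa, Phi, PresentedGroup.toGroup.of]; rfl

lemma Phi_aa_zpow (c : ℤ) :
    Phi p q hp hpq ((aa p q) ^ c) = HNNExtension.of (mz c) := by
  rw [map_zpow, Phi_aa, ← map_zpow, mz_zpow, mul_one]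

include hp hpq in
lemma aa_zpow_inj {c d : ℤ} (h : (aa p q) ^ c = (aa p q) ^ d) : c = d := by
  have h2 := congrArg (Phi p q hp hpq) h
  rw [Phi_aa_zpow, Phi_aa_zpow] at h2
  exact mz_injective (HNNExtension.of_injective (φ := phiAB p q hp hpq) h2)

/-! ### digit systems for mountain words -/

/-- `ValidL p q α0 γ α` : the mountain word with top block `a^α0` and descent digits `γ`
(outermost digit first) evaluates to `a^α`. -/
def ValidL (p q α0 : ℤ) : List ℤ → ℤ → Prop
  | [], α => α = α0
  | g :: γ, α => ∃ b : ℤ, ValidL p q α0 γ (p * b) ∧ α = q * b + g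

/-- The mountain word `t^k a^{α0} t⁻¹ a^{γ_k} ⋯ t⁻¹ a^{γ_1}` (digits outermost first). -/
def mtnW (α0 : ℤ) : List ℤ → List Letter
  | [] => aPow α0
  | g :: γ => Letter.t :: (mtnW α0 γ ++ Letter.T :: aPow g)

/-- length of a mountain word. -/
def mcost (α0 : ℤ) (γ : List ℤ) : ℕ := 2 * γ.length + α0.natAbs + (γ.map Int.natAbs).sum

lemma len_mtnW (α0 : ℤ) (γ : List ℤ) : (mtnW α0 γ).length = mcost α0 γ := by
  induction γ with
  | nil => simp [mtnW, mcost, len_aPow]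
  | cons g γ ih =>
      simp [mtnW, mcost, len_aPow] at *
      omega

lemma eval_mtnW {α0 α : ℤ} {γ : List ℤ} (h : ValidL p q α0 γ α) :
    eval p q (mtnW α0 γ) = (aa p q) ^ α := by
  induction γ generalizing α with
  | nil =>
      have : α = α0 := h
      subst this
      exact eval_aPow p q α
  | cons g γ ih =>
      obtain ⟨b, hv, hval⟩ := h
      show eval p q (Letter.t :: (mtnW α0 γ ++ Letter.T :: aPow g)) = _
      rw [eval_cons, show (Letter.T :: aPow g) = [Letter.T] ++ aPow g from rfl,
        eval_append, eval_append, ih hv, eval_singleton, eval_aPow]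
      show tb p q * ((aa p q) ^ (p * b) * ((tb p q)⁻¹ * (aa p q) ^ g)) = _
      rw [hval, ← mul_assoc, ← mul_assoc, rel_zpow p q b, zpow_add]

/-- `Mok p q c n` : there is a valid mountain word for `a^c` of length at most `n`. -/
def Mok (c : ℤ) (n : ℕ) : Prop := ∃ α0 γ, ValidL p q α0 γ c ∧ mcost α0 γ ≤ n

lemma Mok_plain (c : ℤ) : Mok p q c c.natAbs :=
  ⟨c, [], rfl, by simp [mcost]⟩

lemma Mok_mono {c : ℤ} {n m : ℕ} (h : Mok p q c n) (hnm : n ≤ m) : Mok p q c m := by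
  obtain ⟨α0, γ, hv, hc⟩ := h
  exact ⟨α0, γ, hv, le_trans hc hnm⟩

lemma valid_pad {α0 c : ℤ} {γ : List ℤ} (h : ValidL p q α0 γ c) :
    ValidL p q 0 (γ ++ [α0]) c := by
  induction γ generalizing c with
  | nil =>
      exact ⟨0, by simp [ValidL], by rw [h]; ring⟩
  | cons g γ ih =>
      obtain ⟨b, hv, hval⟩ := h
      exact ⟨b, ih hv, hval⟩

lemma valid_padN (j : ℕ) {α0 c : ℤ} {γ : List ℤ} (h : ValidL p q α0 γ c) :
    ∃ α0' γ', ValidL p q α0' γ' c ∧ γ'.length = γ.length + j ∧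
      α0'.natAbs + (γ'.map Int.natAbs).sum = α0.natAbs + (γ.map Int.natAbs).sum := by
  induction j generalizing α0 γ with
  | zero => exact ⟨α0, γ, h, by simp, rfl⟩
  | succ j ih =>
      obtain ⟨α0', γ', hv, hlen, hsum⟩ := ih h
      refine ⟨0, γ' ++ [α0'], valid_pad p q hv, by simp [hlen]; omega, ?_⟩
      simp [List.map_append, List.sum_append] at *
      omega

lemma valid_add {α0 β0 c d : ℤ} {γ δ : List ℤ} (h1 : ValidL p q α0 γ c)
    (h2 : ValidL p q β0 δ d) (hlen : γ.length = δ.length) :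
    ValidL p q (α0 + β0) (List.zipWith (· + ·) γ δ) (c + d) := by
  induction γ generalizing δ c d with
  | nil =>
      have : δ = [] := by cases δ <;> simp_all
      subst this
      have e1 : c = α0 := h1
      have e2 : d = β0 := h2
      show c + d = α0 + β0
      omega
  | cons g γ ih =>
      cases δ with
      | nil => simp at hlen
      | cons h' δ =>
          obtain ⟨b1, hv1, he1⟩ := h1
          obtain ⟨b2, hv2, he2⟩ := h2
          refine ⟨b1 + b2, ?_, by rw [he1, he2]; ring⟩
          have := ih hv1 hv2 (by simpa using hlen)
          rwa [show p * b1 + p * b2 = p * (b1 + b2) from by ring] at this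

lemma natAbs_zip_sum_le (γ δ : List ℤ) (hlen : γ.length = δ.length) :
    ((List.zipWith (· + ·) γ δ).map Int.natAbs).sum ≤
      (γ.map Int.natAbs).sum + (δ.map Int.natAbs).sum := by
  induction γ generalizing δ with
  | nil => simp
  | cons g γ ih =>
      cases δ with
      | nil => simp
      | cons h' δ =>
          simp only [List.zipWith_cons_cons, List.map_cons, List.sum_cons]
          have h1 := ih δ (by simpa using hlen)
          have h2 : (g + h').natAbs ≤ g.natAbs + h'.natAbs := Int.natAbs_add_le g h'
          omega

lemma Mok_add {c d : ℤ} {n m : ℕ} (h1 : Mok p q c n) (h2 : Mok p q d m) :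
    Mok p q (c + d) (n + m) := by
  obtain ⟨α0, γ, hv1, hc1⟩ := h1
  obtain ⟨β0, δ, hv2, hc2⟩ := h2
  obtain ⟨α0', γ', hv1', hlen1, hsum1⟩ := valid_padN p q (δ.length - γ.length) hv1
  obtain ⟨β0', δ', hv2', hlen2, hsum2⟩ := valid_padN p q (γ.length - δ.length) hv2
  have hlen : γ'.length = δ'.length := by omega
  refine ⟨α0' + β0', List.zipWith (· + ·) γ' δ', valid_add p q hv1' hv2' hlen, ?_⟩
  have hz := natAbs_zip_sum_le γ' δ' hlen
  have hab : (α0' + β0').natAbs ≤ α0'.natAbs + β0'.natAbs := Int.natAbs_add_le _ _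
  have hK : (List.zipWith (· + ·) γ' δ').length = γ'.length := by
    rw [List.length_zipWith]; omega
  simp only [mcost] at *
  omega

lemma Mok_lift {b : ℤ} {n : ℕ} (h : Mok p q (p * b) n) : Mok p q (q * b) (n + 2) := by
  obtain ⟨α0, γ, hv, hc⟩ := h
  refine ⟨α0, 0 :: γ, ⟨b, hv, by ring⟩, ?_⟩
  simp only [mcost, List.length_cons, List.map_cons, List.sum_cons] at *
  omega

include hp hpq in
lemma Mok_shrink {m : ℤ} {n : ℕ} (h : Mok p q (q * m) n) : Mok p q (p * m) n := by
  have hpq' : p.natAbs ≤ q.natAbs := by omega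
  obtain ⟨α0, γ, hv, hc⟩ := h
  cases γ with
  | nil =>
      have e : q * m = α0 := hv
      have : (p * m).natAbs ≤ n := by
        have h1 : (p * m).natAbs ≤ (q * m).natAbs := by
          rw [Int.natAbs_mul, Int.natAbs_mul]
          exact Nat.mul_le_mul_right _ hpq'
        simp only [mcost] at hc
        omega
      exact Mok_mono p q (Mok_plain p q (p * m)) this
  | cons g γ =>
      obtain ⟨b, hv', he⟩ := hv
      have hg : g = q * (m - b) := by linear_combination -he
      have h1 : Mok p q (p * b) (mcost α0 γ) := ⟨α0, γ, hv', le_rfl⟩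
      have h2 : Mok p q (p * (m - b)) ((p * (m - b)).natAbs) := Mok_plain p q _
      have h3 := Mok_add p q h1 h2
      rw [show p * b + p * (m - b) = p * m from by ring] at h3
      apply Mok_mono p q h3
      have h4 : (p * (m - b)).natAbs ≤ (q * (m - b)).natAbs := by
        rw [Int.natAbs_mul, Int.natAbs_mul]
        exact Nat.mul_le_mul_right _ hpq'
      simp only [mcost, List.length_cons, List.map_cons, List.sum_cons, hg] at *
      omega

/-! ### structured words and the pinch lemma -/

/-- A structured-word entry `(u, c, n)` represents `t^u * a^c` where a mountain word
of length at most `n` is known for `a^c`. -/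
abbrev Entry := ℤˣ × ℤ × ℕ

def sval (L : List Entry) : BS p q :=
  (L.map (fun e => tb p q ^ (e.1 : ℤ) * (aa p q) ^ e.2.1)).prod

def scost (L : List Entry) : ℕ := (L.map (fun e => 1 + e.2.2)).sum

lemma sval_nil : sval p q [] = 1 := rfl

lemma sval_cons (e : Entry) (L : List Entry) :
    sval p q (e :: L) = tb p q ^ (e.1 : ℤ) * (aa p q) ^ e.2.1 * sval p q L := by
  simp [sval]

lemma sval_append (L1 L2 : List Entry) :
    sval p q (L1 ++ L2) = sval p q L1 * sval p q L2 := by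
  simp [sval]

lemma scost_nil : scost [] = 0 := rfl

lemma scost_cons (e : Entry) (L : List Entry) : scost (e :: L) = 1 + e.2.2 + scost L := by
  simp [scost]

lemma scost_append (L1 L2 : List Entry) : scost (L1 ++ L2) = scost L1 + scost L2 := by
  simp [scost]

lemma exists_bad_of_not_chain' {β : Type*} (R : β → β → Prop) :
    ∀ (l : List β), ¬ l.Chain' R → ∃ l1 a b l2, l = l1 ++ a :: b :: l2 ∧ ¬ R a b := by
  intro l
  induction l with
  | nil => intro h; exact absurd List.isChain_nil h
  | cons a l ih =>
      intro h
      cases l with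
      | nil => exact absurd (List.isChain_singleton a) h
      | cons b l =>
          rw [show List.Chain' R (a :: b :: l) ↔ _ from List.isChain_cons_cons] at h
          by_cases hab : R a b
          · have h2 : ¬ (b :: l).Chain' R := fun hc => h ⟨hab, hc⟩
            obtain ⟨l1, x, y, l2, heq, hxy⟩ := ih h2
            exact ⟨a :: l1, x, y, l2, by rw [heq]; rfl, hxy⟩
          · exact ⟨[], a, b, l, rfl, hab⟩

lemma sval_Phi (L : List Entry) :
    Phi p q hp hpq (sval p q L) =
      (L.map (fun e => (HNNExtension.t : HH p q hp hpq) ^ ((e.1 : ℤˣ) : ℤ) *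
        HNNExtension.of (mz e.2.1))).prod := by
  induction L with
  | nil => simp [sval_nil]
  | cons e L ih =>
      rw [sval_cons, map_mul, map_mul, map_zpow, Phi_tb, Phi_aa_zpow, ih]
      simp

include hp hpq in
lemma pinch (c0 α : ℤ) (L : List Entry) (hL : L ≠ [])
    (he : (aa p q) ^ c0 * sval p q L = (aa p q) ^ α) :
    ∃ (L1 : List Entry) (e1 e2 : Entry) (L2 : List Entry),
      L = L1 ++ e1 :: e2 :: L2 ∧ e2.1 = -e1.1 ∧
      ((e1.1 = 1 ∧ p ∣ e1.2.1) ∨ (e1.1 = -1 ∧ q ∣ e1.2.1)) := by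
  by_contra hcon
  have hchain : L.Chain'
      (fun e f => mz e.2.1 ∈ HNNExtension.toSubgroup (Asub p) (Bsub q) e.1 → e.1 = f.1) := by
    by_contra hnc
    obtain ⟨L1, e1, e2, L2, heq, hbad⟩ := exists_bad_of_not_chain' _ L hnc
    push_neg at hbad
    obtain ⟨hmem, hne⟩ := hbad
    apply hcon
    refine ⟨L1, e1, e2, L2, heq, ?_, ?_⟩
    · rcases Int.units_eq_one_or e1.1 with h1 | h1 <;>
        rcases Int.units_eq_one_or e2.1 with h2 | h2 <;>
        simp_all
    · rcases Int.units_eq_one_or e1.1 with h1 | h1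
      · left
        refine ⟨h1, ?_⟩
        rw [h1] at hmem
        rw [HNNExtension.toSubgroup_one] at hmem
        exact (mem_zpowers_iff_dvd p e1.2.1).mp hmem
      · right
        refine ⟨h1, ?_⟩
        rw [h1] at hmem
        rw [HNNExtension.toSubgroup_neg_one] at hmem
        exact (mem_zpowers_iff_dvd q e1.2.1).mp hmem
  let w' : HNNExtension.NormalWord.ReducedWord MZ (Asub p) (Bsub q) :=
    { head := mz c0
      toList := L.map (fun e => (e.1, mz e.2.1))
      chain := by
        rw [List.isChain_map]
        exact hchain }
  have hprod : w'.prod (phiAB p q hp hpq) = HNNExtension.of (mz α) := by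
    show HNNExtension.of (mz c0) *
      ((L.map (fun e => ((e.1 : ℤˣ), mz e.2.1))).map
        (fun x => (HNNExtension.t : HH p q hp hpq) ^ ((x.1 : ℤˣ) : ℤ) *
          HNNExtension.of x.2)).prod = HNNExtension.of (mz α)
    rw [List.map_map]
    rw [← Phi_aa_zpow p q hp hpq c0, ← Phi_aa_zpow p q hp hpq α, ← he, map_mul]
    congr 1
    rw [sval_Phi]
    rfl
  have hnil := HNNExtension.ReducedWord.toList_eq_nil_of_mem_of_range
    (φ := phiAB p q hp hpq) w' ⟨mz α, hprod.symm⟩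
  have : L = [] := by
    have : L.map (fun e => ((e.1 : ℤˣ), mz e.2.1)) = [] := hnil
    exact List.map_eq_nil_iff.mp this
  exact hL this

include hp hpq in
lemma engine_base (c0 : ℤ) (n0 : ℕ) (α : ℤ) (h0 : Mok p q c0 n0)
    (he : (aa p q) ^ c0 * sval p q [] = (aa p q) ^ α) : Mok p q α (n0 + scost []) := by
  rw [sval_nil, mul_one] at he
  have hca := aa_zpow_inj p q hp hpq he
  subst hca
  simpa [scost_nil] using h0

include hp hpq in
lemma engine : ∀ (N : ℕ) (c0 : ℤ) (n0 : ℕ) (L : List Entry) (α : ℤ),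
    L.length ≤ N → Mok p q c0 n0 → (∀ e ∈ L, Mok p q e.2.1 e.2.2) →
    (aa p q) ^ c0 * sval p q L = (aa p q) ^ α → Mok p q α (n0 + scost L) := by
  intro N
  induction N with
  | zero =>
      intro c0 n0 L α hlen h0 _ he
      have hnil : L = [] := List.length_eq_zero_iff.mp (Nat.le_zero.mp hlen)
      subst hnil
      exact engine_base p q hp hpq c0 n0 α h0 he
  | succ N ih =>
      intro c0 n0 L α hlen h0 hok he
      rcases eq_or_ne L [] with rfl | hL
      · exact engine_base p q hp hpq c0 n0 α h0 he
      obtain ⟨L1, e1, e2, L2, heq, hsign, hdiv⟩ := pinch p q hp hpq c0 α L hL he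
      obtain ⟨u, g, n1⟩ := e1
      obtain ⟨u', g', n2⟩ := e2
      simp only at hsign hdiv
      subst hsign
      subst heq
      have hok1 : Mok p q g n1 := hok (u, g, n1) (by simp)
      have hok2 : Mok p q g' n2 := hok (-u, g', n2) (by simp)
      have main : ∃ v : ℤ, Mok p q v (n1 + 2 + n2) ∧ ∀ X : BS p q,
          tb p q ^ ((u : ℤˣ) : ℤ) * ((aa p q) ^ g * (tb p q ^ (((-u) : ℤˣ) : ℤ) *
            ((aa p q) ^ g' * X))) = (aa p q) ^ v * X := by
        rcases hdiv with ⟨hu, b, hb⟩ | ⟨hu, m, hm⟩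
        · subst hb
          refine ⟨q * b + g', ?_, ?_⟩
          · exact Mok_add p q (Mok_lift p q hok1) hok2
          · intro X
            have hcast1 : ((u : ℤˣ) : ℤ) = 1 := by rw [hu]; rfl
            have hcast2 : (((-u) : ℤˣ) : ℤ) = -1 := by rw [hu]; rfl
            rw [hcast1, hcast2, zpow_one, zpow_neg_one]
            have hr := rel_zpow p q b
            rw [zpow_add, ← hr]
            group
        · subst hm
          refine ⟨p * m + g', ?_, ?_⟩
          · exact Mok_mono p q (Mok_add p q (Mok_shrink p q hp hpq hok1) hok2) (by omega)
          · intro X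
            have hcast1 : ((u : ℤˣ) : ℤ) = -1 := by rw [hu]; rfl
            have hcast2 : (((-u) : ℤˣ) : ℤ) = 1 := by rw [hu]; rfl
            rw [hcast1, hcast2, zpow_one, zpow_neg_one]
            have hr := rel_zpow p q m
            rw [zpow_add, ← hr]
            group
      obtain ⟨v, hMokv, hkey⟩ := main
      rcases List.eq_nil_or_concat L1 with rfl | ⟨L1', f, rfl⟩
      · have he' : (aa p q) ^ (c0 + v) * sval p q L2 = (aa p q) ^ α := by
          simp only [List.nil_append, sval_cons, mul_assoc] at he
          rw [zpow_add, mul_assoc, ← hkey (sval p q L2)]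
          exact he
        have hres := ih (c0 + v) (n0 + (n1 + 2 + n2)) L2 α
          (by simp at hlen; omega) (Mok_add p q h0 hMokv)
          (fun e hme => hok e (by simp [hme])) he'
        apply Mok_mono p q hres
        simp [scost_cons]
        omega
      · set f' : Entry := (f.1, f.2.1 + v, f.2.2 + (n1 + 2 + n2)) with hf'
        have he' : (aa p q) ^ c0 * sval p q (L1' ++ f' :: L2) = (aa p q) ^ α := by
          simp only [List.concat_eq_append, sval_append, sval_cons, sval_nil, mul_one,
            mul_assoc, List.append_assoc, List.cons_append, List.nil_append] at he ⊢
          rw [hkey (sval p q L2)] at he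
          simp only [hf', zpow_add, mul_assoc]
          exact he
        have hres := ih c0 n0 (L1' ++ f' :: L2) α
          (by simp at hlen ⊢; omega) h0
          (by
            intro e hme
            simp only [List.mem_append, List.mem_cons] at hme
            rcases hme with h | h | h
            · exact hok e (by simp [h])
            · subst h
              show Mok p q (f.2.1 + v) (f.2.2 + (n1 + 2 + n2))
              exact Mok_add p q (hok f (by simp)) hMokv
            · exact hok e (by simp [h])) he'
        apply Mok_mono p q hres
        simp [scost_append, scost_cons, hf']
        omega

/-! ### converting arbitrary words to structured words -/

def toSW : List Letter → ℤ × List Entry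
  | [] => (0, [])
  | .a :: w => ((toSW w).1 + 1, (toSW w).2)
  | .A :: w => ((toSW w).1 - 1, (toSW w).2)
  | .t :: w => (0, (1, (toSW w).1, (toSW w).1.natAbs) :: (toSW w).2)
  | .T :: w => (0, (-1, (toSW w).1, (toSW w).1.natAbs) :: (toSW w).2)

lemma eval_toSW : ∀ w : List Letter,
    eval p q w = (aa p q) ^ (toSW w).1 * sval p q (toSW w).2 := by
  intro w
  induction w with
  | nil => simp [toSW, sval_nil, eval]
  | cons c w ih =>
      cases c
      · show eval p q (.a :: w) = (aa p q) ^ ((toSW w).1 + 1) * sval p q (toSW w).2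
        rw [eval_cons, ih, ← mul_assoc]
        congr 1
        show aa p q * (aa p q) ^ (toSW w).1 = _
        rw [add_comm, zpow_add, zpow_one]
      · show eval p q (.A :: w) = (aa p q) ^ ((toSW w).1 - 1) * sval p q (toSW w).2
        rw [eval_cons, ih, ← mul_assoc]
        congr 1
        show (aa p q)⁻¹ * (aa p q) ^ (toSW w).1 = _
        rw [show (toSW w).1 - 1 = -1 + (toSW w).1 from by ring, zpow_add, zpow_neg_one]
      · show eval p q (.t :: w) =
          (aa p q) ^ (0 : ℤ) * sval p q ((1, (toSW w).1, (toSW w).1.natAbs) :: (toSW w).2)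
        rw [eval_cons, ih, sval_cons]
        simp [mul_assoc, evalLetter, tb]
      · show eval p q (.T :: w) =
          (aa p q) ^ (0 : ℤ) * sval p q ((-1, (toSW w).1, (toSW w).1.natAbs) :: (toSW w).2)
        rw [eval_cons, ih, sval_cons]
        simp [mul_assoc, zpow_neg_one, evalLetter, tb]

lemma cost_toSW : ∀ w : List Letter,
    (toSW w).1.natAbs + scost (toSW w).2 ≤ w.length := by
  intro w
  induction w with
  | nil => simp [toSW, scost_nil]
  | cons c w ih =>
      cases c <;>
        simp only [toSW, scost_cons, List.length_cons] <;>
        omega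

lemma mok_toSW : ∀ (w : List Letter) (e : Entry), e ∈ (toSW w).2 → Mok p q e.2.1 e.2.2 := by
  intro w
  induction w with
  | nil => intro e he; simp [toSW] at he
  | cons c w ih =>
      intro e he
      cases c
      · exact ih e he
      · exact ih e he
      · rcases List.mem_cons.mp he with rfl | h
        · exact Mok_plain p q _
        · exact ih e h
      · rcases List.mem_cons.mp he with rfl | h
        · exact Mok_plain p q _
        · exact ih e h

include hp hpq in
lemma core (α : ℤ) : ∃ (α0 : ℤ) (γ : List ℤ), ValidL p q α0 γ α ∧
    ∀ v : List Letter, eval p q v = (aa p q) ^ α → mcost α0 γ ≤ v.length := by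
  set S : Set ℕ := {n | ∃ w : List Letter, eval p q w = (aa p q) ^ α ∧ w.length = n} with hS
  have hne : (aPow α).length ∈ S := ⟨aPow α, eval_aPow p q α, rfl⟩
  obtain ⟨w, hw, hwlen⟩ := Nat.sInf_mem (⟨(aPow α).length, hne⟩ : S.Nonempty)
  have heng := engine p q hp hpq (toSW w).2.length (toSW w).1 (toSW w).1.natAbs (toSW w).2 α
    le_rfl (Mok_plain p q _) (mok_toSW p q w) ((eval_toSW p q w).symm.trans hw)
  have hMok : Mok p q α (sInf S) := by
    apply Mok_mono p q heng
    have := cost_toSW w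
    omega
  obtain ⟨α0, γ, hv, hc⟩ := hMok
  refine ⟨α0, γ, hv, ?_⟩
  intro v hev
  have hvS : v.length ∈ S := ⟨v, hev, rfl⟩
  have := Nat.sInf_le hvS
  omega

/-! ### shapes of mountain words -/

lemma mtnW_shape (α0 : ℤ) (γ : List ℤ) :
    mtnW α0 γ = List.replicate γ.length Letter.t ++ aPow α0 ++
      ((γ.reverse.map (fun g => Letter.T :: aPow g)).flatten) := by
  induction γ with
  | nil => simp [mtnW]
  | cons g γ ih =>
      show Letter.t :: (mtnW α0 γ ++ Letter.T :: aPow g) = _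
      rw [ih]
      simp [List.replicate_succ, List.append_assoc]

def mtnV (α0 : ℤ) : List ℤ → List Letter
  | [] => aPow α0
  | g :: γ => aPow g ++ [Letter.t] ++ mtnV α0 γ ++ [Letter.T]

lemma winv_mtnW (α0 : ℤ) (γ : List ℤ) :
    winv (mtnW α0 γ) = mtnV (-α0) (γ.map Neg.neg) := by
  induction γ with
  | nil => simp [mtnW, mtnV, winv_aPow]
  | cons g γ ih =>
      show winv (Letter.t :: (mtnW α0 γ ++ Letter.T :: aPow g)) = _
      rw [winv_cons, winv_append, show (Letter.T :: aPow g) = [Letter.T] ++ aPow g from rfl,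
        winv_append, winv_aPow, ih]
      show aPow (-g) ++ winv [Letter.T] ++ mtnV (-α0) (γ.map Neg.neg) ++ [linv Letter.t] = _
      show aPow (-g) ++ [Letter.t] ++ mtnV (-α0) (γ.map Neg.neg) ++ [Letter.T] = _
      rfl

lemma mtnV_shape (α0 : ℤ) (ε : List ℤ) :
    mtnV α0 ε = ((ε.map (fun g => aPow g ++ [Letter.t])).flatten) ++ aPow α0 ++
      List.replicate ε.length Letter.T := by
  induction ε with
  | nil => simp [mtnV]
  | cons g ε ih =>
      show aPow g ++ [Letter.t] ++ mtnV α0 ε ++ [Letter.T] = _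
      rw [ih]
      rw [List.length_cons, List.replicate_succ']
      simp [List.append_assoc]

lemma ofFn_aux1 (δ : List ℤ) :
    (List.ofFn fun i : Fin δ.length => Letter.T :: aPow (δ.get i)) =
      δ.map (fun g => Letter.T :: aPow g) := by
  simpa using List.ofFn_getElem_eq_map δ (fun g => Letter.T :: aPow g)

lemma ofFn_aux2 (δ : List ℤ) :
    (List.ofFn fun i : Fin δ.length => aPow (δ.get i) ++ [Letter.t]) =
      δ.map (fun g => aPow g ++ [Letter.t]) := by
  simpa using List.ofFn_getElem_eq_map δ (fun g => aPow g ++ [Letter.t])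

include hp hpq in
lemma part1 (α : ℤ) : ∃ (k : ℕ) (α0 : ℤ) (γs : Fin k → ℤ),
    eval p q (List.replicate k Letter.t ++ aPow α0 ++
      (List.ofFn fun i : Fin k => Letter.T :: aPow (γs i)).flatten) = eval p q (aPow α) ∧
    Geodesic p q (List.replicate k Letter.t ++ aPow α0 ++
      (List.ofFn fun i : Fin k => Letter.T :: aPow (γs i)).flatten) := by
  obtain ⟨α0, γ, hv, hmin⟩ := core p q hp hpq α
  refine ⟨γ.reverse.length, α0, fun i => γ.reverse.get i, ?_⟩
  have hshape : List.replicate γ.reverse.length Letter.t ++ aPow α0 ++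
      (List.ofFn fun i : Fin γ.reverse.length =>
        Letter.T :: aPow (γ.reverse.get i)).flatten = mtnW α0 γ := by
    rw [ofFn_aux1, mtnW_shape, List.length_reverse]
  rw [hshape]
  constructor
  · rw [eval_mtnW p q hv, eval_aPow]
  · intro v hev
    rw [eval_mtnW p q hv] at hev
    rw [len_mtnW]
    exact hmin v hev

include hp hpq in
lemma part2 (α : ℤ) : ∃ (k : ℕ) (α0 : ℤ) (γs : Fin k → ℤ),
    eval p q ((List.ofFn fun i : Fin k => aPow (γs i) ++ [Letter.t]).flatten ++ aPow α0 ++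
      List.replicate k Letter.T) = eval p q (aPow α) ∧
    Geodesic p q ((List.ofFn fun i : Fin k => aPow (γs i) ++ [Letter.t]).flatten ++ aPow α0 ++
      List.replicate k Letter.T) := by
  obtain ⟨α0, γ, hv, hmin⟩ := core p q hp hpq (-α)
  set ε : List ℤ := γ.map Neg.neg with hε
  refine ⟨ε.length, -α0, fun i => ε.get i, ?_⟩
  have hshape : (List.ofFn fun i : Fin ε.length => aPow (ε.get i) ++ [Letter.t]).flatten ++
      aPow (-α0) ++ List.replicate ε.length Letter.T = winv (mtnW α0 γ) := by
    rw [ofFn_aux2, winv_mtnW, mtnV_shape]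
  rw [hshape]
  have hevW : eval p q (winv (mtnW α0 γ)) = (aa p q) ^ α := by
    rw [eval_winv, eval_mtnW p q hv, ← zpow_neg, neg_neg]
  constructor
  · rw [hevW, eval_aPow]
  · intro v hev
    rw [hevW] at hev
    have hinv : eval p q (winv v) = (aa p q) ^ (-α) := by
      rw [eval_winv, hev, zpow_neg]
    have := hmin (winv v) hinv
    rw [winv_length] at this ⊢
    rw [len_mtnW]
    exact this

end BSW

theorem horocyclic_geodesic_forms (p q α : ℤ) (hp : 1 ≤ p) (hpq : p < q) :
    (∃ (k : ℕ) (α0 : ℤ) (γs : Fin k → ℤ),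
      eval p q (List.replicate k Letter.t ++ aPow α0 ++
        (List.ofFn fun i : Fin k => Letter.T :: aPow (γs i)).flatten) = eval p q (aPow α) ∧
      Geodesic p q (List.replicate k Letter.t ++ aPow α0 ++
        (List.ofFn fun i : Fin k => Letter.T :: aPow (γs i)).flatten)) ∧
    (∃ (k : ℕ) (α0 : ℤ) (γs : Fin k → ℤ),
      eval p q ((List.ofFn fun i : Fin k => aPow (γs i) ++ [Letter.t]).flatten ++ aPow α0 ++
        List.replicate k Letter.T) = eval p q (aPow α) ∧
      Geodesic p q ((List.ofFn fun i : Fin k => aPow (γs i) ++ [Letter.t]).flatten ++ aPow α0 ++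
        List.replicate k Letter.T)) :=
  ⟨BSW.part1 p q hp hpq α, BSW.part2 p q hp hpq α⟩
end

section
/- Let p, q be integers with 1 ≤ p < q and let α ∈ ℤ with |α| ≥ 2q. Then there exists a geodesic word representing a^α in BS(p,q) that contains the letter t; in fact there is a geodesic word representing a^α of the form t^k a^{α_0} t⁻¹ a^{γ_1} t⁻¹ ⋯ t⁻¹ a^{γ_k} with k ≥ 1. -/
structure BSChain (p q : ℤ) where
  k : ℕ
  β : ℕ → ℤ
  dvd : ∀ i, i < k → p ∣ β i

namespace BSChain

variable {p q : ℤ}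

def digit (c : BSChain p q) (i : ℕ) : ℤ := c.β (i+1) - q * (c.β i / p)

def cost (c : BSChain p q) : ℕ :=
  2 * c.k + (c.β 0).natAbs + ∑ i ∈ Finset.range c.k, (c.digit i).natAbs

def value (c : BSChain p q) : ℤ := c.β c.k

end BSChain

def MSet (p q α : ℤ) : Set ℕ := {n | ∃ c : BSChain p q, c.value = α ∧ c.cost = n}

noncomputable def Gm (p q α : ℤ) : ℕ := sInf (MSet p q α)

section GmLemmas

variable {p q : ℤ}

def constChain (p q α : ℤ) : BSChain p q := ⟨0, fun _ => α, fun i h => by omega⟩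

lemma constChain_value (α : ℤ) : (constChain p q α).value = α := rfl

lemma constChain_cost (α : ℤ) : (constChain p q α).cost = α.natAbs := by
  simp [BSChain.cost, constChain]

lemma MSet_nonempty (α : ℤ) : (MSet p q α).Nonempty :=
  ⟨_, constChain p q α, constChain_value α, rfl⟩

lemma Gm_le_cost {α : ℤ} {c : BSChain p q} (h : c.value = α) : Gm p q α ≤ c.cost :=
  Nat.sInf_le ⟨c, h, rfl⟩

lemma Gm_le_natAbs (α : ℤ) : Gm p q α ≤ α.natAbs := by
  simpa [constChain_cost] using Gm_le_cost (p := p) (q := q) (constChain_value (p:=p) (q:=q) α)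

lemma exists_chain_Gm (α : ℤ) : ∃ c : BSChain p q, c.value = α ∧ c.cost = Gm p q α :=
  Nat.sInf_mem (MSet_nonempty α)

/-- Translation: adding `z` on top of a chain. -/
lemma Gm_add_le_natAbs (x z : ℤ) : Gm p q (x + z) ≤ Gm p q x + z.natAbs := by
  obtain ⟨c, hv, hc⟩ := exists_chain_Gm (p := p) (q := q) x
  set c' : BSChain p q := ⟨c.k, fun i => if i = c.k then c.β c.k + z else c.β i,
    fun i h => by simp only [if_neg (show i ≠ c.k by omega)]; exact c.dvd i h⟩ with hc'
  have hval : c'.value = x + z := by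
    simp [BSChain.value, hc', ← hv]
  refine le_trans (Gm_le_cost hval) ?_
  rw [← hc]
  rcases Nat.eq_zero_or_pos c.k with hk | hk
  · simp only [BSChain.cost, hc', hk]
    simp [Int.natAbs_add_le]
  · obtain ⟨n, hn⟩ : ∃ n, c.k = n + 1 := ⟨c.k - 1, by omega⟩
    have hβ0 : c'.β 0 = c.β 0 := by
      show (if 0 = c.k then c.β c.k + z else c.β 0) = c.β 0
      rw [if_neg (show 0 ≠ c.k by omega)]
    have hdig : ∀ i < n, c'.digit i = c.digit i := by
      intro i hi
      show (if i+1 = c.k then c.β c.k + z else c.β (i+1)) -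
          q * ((if i = c.k then c.β c.k + z else c.β i) / p) = c.digit i
      rw [if_neg (show i+1 ≠ c.k by omega), if_neg (show i ≠ c.k by omega)]
      rfl
    have hdign : c'.digit n = c.digit n + z := by
      show (if n+1 = c.k then c.β c.k + z else c.β (n+1)) -
          q * ((if n = c.k then c.β c.k + z else c.β n) / p) = c.digit n + z
      rw [if_pos (by omega), if_neg (show n ≠ c.k by omega), hn, BSChain.digit]
      ring
    have hkk : c'.k = c.k := rfl
    simp only [BSChain.cost, hkk, hβ0, hn, Finset.sum_range_succ]
    rw [Finset.sum_congr rfl (fun i hi => by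
      rw [hdig i (Finset.mem_range.mp hi)]), hdign]
    have := Int.natAbs_add_le (c.digit n) z
    omega

/-- Negating a chain. -/
lemma Gm_neg_le (hp : 0 < p) (x : ℤ) : Gm p q (-x) ≤ Gm p q x := by
  obtain ⟨c, hv, hc⟩ := exists_chain_Gm (p := p) (q := q) x
  set c' : BSChain p q := ⟨c.k, fun i => - c.β i, fun i h => (c.dvd i h).neg_right⟩ with hc'
  have hval : c'.value = -x := by simp [BSChain.value, hc', ← hv]
  refine le_trans (Gm_le_cost hval) ?_
  rw [← hc]
  have hdig : ∀ i < c.k, c'.digit i = - c.digit i := by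
    intro i hi
    obtain ⟨w, hw⟩ := c.dvd i hi
    show - c.β (i+1) - q * ((- c.β i) / p) = - c.digit i
    rw [BSChain.digit, hw, ← mul_neg,
      Int.mul_ediv_cancel_left _ (by omega : p ≠ 0),
      Int.mul_ediv_cancel_left _ (by omega : p ≠ 0)]
    ring
  refine le_of_eq ?_
  show 2 * c.k + (- c.β 0).natAbs + ∑ i ∈ Finset.range c.k, (c'.digit i).natAbs = c.cost
  rw [BSChain.cost, Int.natAbs_neg]
  congr 1
  exact Finset.sum_congr rfl fun i hi => by
    rw [hdig i (Finset.mem_range.mp hi), Int.natAbs_neg]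

/-- Merging two chains: subadditivity of `Gm`. -/
lemma merge_aux (hp : 0 < p) (c1 c2 : BSChain p q) (h : c2.k ≤ c1.k) :
    ∃ c : BSChain p q, c.value = c1.value + c2.value ∧ c.cost ≤ c1.cost + c2.cost := by
  set s := c1.k - c2.k with hs
  set pad : ℕ → ℤ := fun i => if s ≤ i then c2.β (i - s) else 0 with hpad
  have hpaddvd : ∀ i, i < c1.k → p ∣ pad i := by
    intro i hi
    simp only [hpad]
    split
    · exact c2.dvd _ (by omega)
    · exact dvd_zero p
  set c : BSChain p q := ⟨c1.k, fun i => c1.β i + pad i,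
    fun i hi => dvd_add (c1.dvd i hi) (hpaddvd i hi)⟩ with hcdef
  refine ⟨c, ?_, ?_⟩
  · show c1.β c1.k + pad c1.k = c1.value + c2.value
    simp only [hpad, if_pos (show s ≤ c1.k by omega)]
    rw [show c1.k - s = c2.k by omega]
    rfl
  · -- cost estimate
    set g : ℕ → ℕ := fun i => if i + 1 = s then (c2.β 0).natAbs
      else if s ≤ i then (c2.digit (i - s)).natAbs else 0 with hg
    have hdig : ∀ i < c1.k, (c.digit i).natAbs ≤ (c1.digit i).natAbs + g i := by
      intro i hi
      show ((c1.β (i+1) + pad (i+1)) - q * ((c1.β i + pad i) / p)).natAbs ≤ _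
      rcases lt_trichotomy (i+1) s with h1 | h1 | h1
      · have : pad (i+1) = 0 := by simp only [hpad]; rw [if_neg (by omega)]
        have h2 : pad i = 0 := by simp only [hpad]; rw [if_neg (by omega)]
        rw [this, h2, hg]
        simp only [if_neg (show ¬ (i+1 = s) by omega), if_neg (show ¬ (s ≤ i) by omega)]
        simp [BSChain.digit]
      · have : pad (i+1) = c2.β 0 := by
          simp only [hpad]; rw [if_pos (by omega)]; congr 1; omega
        have h2 : pad i = 0 := by simp only [hpad]; rw [if_neg (by omega)]
        rw [this, h2, hg]
        simp only [if_pos h1]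
        rw [add_zero]
        calc (c1.β (i+1) + c2.β 0 - q * (c1.β i / p)).natAbs
            = (c1.digit i + c2.β 0).natAbs := by rw [BSChain.digit]; ring_nf
          _ ≤ _ := Int.natAbs_add_le _ _
      · have hsi : s ≤ i := by omega
        have hpi : pad i = c2.β (i - s) := by simp only [hpad]; rw [if_pos hsi]
        have hpi1 : pad (i+1) = c2.β ((i - s) + 1) := by
          simp only [hpad]; rw [if_pos (by omega)]; congr 1; omega
        obtain ⟨w1, hw1⟩ := c1.dvd i hi
        obtain ⟨w2, hw2⟩ := c2.dvd (i - s) (by omega)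
        rw [hpi, hpi1, hg]
        simp only [if_neg (show ¬ (i+1 = s) by omega), if_pos hsi]
        have hdiv : (c1.β i + c2.β (i - s)) / p = w1 + w2 := by
          rw [hw1, hw2, ← mul_add, Int.mul_ediv_cancel_left _ (by omega : p ≠ 0)]
        have hd1 : c1.digit i = c1.β (i+1) - q * w1 := by
          rw [BSChain.digit, hw1, Int.mul_ediv_cancel_left _ (by omega : p ≠ 0)]
        have hd2 : c2.digit (i - s) = c2.β ((i-s)+1) - q * w2 := by
          rw [BSChain.digit, hw2, Int.mul_ediv_cancel_left _ (by omega : p ≠ 0)]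
        calc (c1.β (i+1) + c2.β ((i-s)+1) - q * ((c1.β i + c2.β (i-s)) / p)).natAbs
            = (c1.digit i + c2.digit (i - s)).natAbs := by
              rw [hdiv, hd1, hd2]; ring_nf
          _ ≤ _ := Int.natAbs_add_le _ _
    have hsum : ∑ i ∈ Finset.range c1.k, (c.digit i).natAbs ≤
        (∑ i ∈ Finset.range c1.k, (c1.digit i).natAbs) + ∑ i ∈ Finset.range c1.k, g i := by
      rw [← Finset.sum_add_distrib]
      exact Finset.sum_le_sum fun i hi => hdig i (Finset.mem_range.mp hi)
    have hk1 : c1.k = s + c2.k := by omega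
    have hgsum : ∑ i ∈ Finset.range c1.k, g i =
        (if s = 0 then 0 else (c2.β 0).natAbs) + ∑ j ∈ Finset.range c2.k, (c2.digit j).natAbs := by
      rw [hk1, Finset.sum_range_add]
      congr 1
      · rcases Nat.eq_zero_or_pos s with h0 | h0
        · simp [h0]
        · obtain ⟨m, hm⟩ : ∃ m, s = m + 1 := ⟨s - 1, by omega⟩
          rw [if_neg (by omega), hm, Finset.sum_range_succ]
          have : ∑ i ∈ Finset.range m, g i = 0 := by
            refine Finset.sum_eq_zero fun i hi => ?_
            have him := Finset.mem_range.mp hi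
            simp only [hg]
            rw [if_neg (by omega), if_neg (by omega)]
          rw [this, zero_add]
          simp only [hg]
          rw [if_pos (by omega)]
      · refine Finset.sum_congr rfl fun j hj => ?_
        simp only [hg]
        rw [if_neg (by omega), if_pos (by omega)]
        congr 2
        omega
    have hβ0 : (c.β 0).natAbs + (if s = 0 then 0 else (c2.β 0).natAbs) ≤
        (c1.β 0).natAbs + (c2.β 0).natAbs := by
      rcases Nat.eq_zero_or_pos s with h0 | h0
      · have : pad 0 = c2.β 0 := by
          simp only [hpad]
          rw [if_pos (by omega)]
          congr 1
          omega
        show (c1.β 0 + pad 0).natAbs + _ ≤ _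
        rw [this, if_pos h0, add_zero]
        exact Int.natAbs_add_le _ _
      · have : pad 0 = 0 := by simp only [hpad]; rw [if_neg (by omega)]
        show (c1.β 0 + pad 0).natAbs + _ ≤ _
        rw [this, if_neg (by omega), add_zero]
    show 2 * c1.k + (c.β 0).natAbs + ∑ i ∈ Finset.range c1.k, (c.digit i).natAbs ≤ _
    have e1 : c1.cost = 2 * c1.k + (c1.β 0).natAbs
        + ∑ i ∈ Finset.range c1.k, (c1.digit i).natAbs := rfl
    have e2 : c2.cost = 2 * c2.k + (c2.β 0).natAbs
        + ∑ i ∈ Finset.range c2.k, (c2.digit i).natAbs := rfl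
    omega

lemma Gm_add_le (hp : 0 < p) (x y : ℤ) : Gm p q (x + y) ≤ Gm p q x + Gm p q y := by
  obtain ⟨c1, hv1, hc1⟩ := exists_chain_Gm (p := p) (q := q) x
  obtain ⟨c2, hv2, hc2⟩ := exists_chain_Gm (p := p) (q := q) y
  rcases le_total c2.k c1.k with h | h
  · obtain ⟨c, hv, hc⟩ := merge_aux hp c1 c2 h
    calc Gm p q (x + y) ≤ c.cost := Gm_le_cost (by rw [hv, hv1, hv2])
      _ ≤ _ := by omega
  · obtain ⟨c, hv, hc⟩ := merge_aux hp c2 c1 h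
    calc Gm p q (x + y) ≤ c.cost := Gm_le_cost (by rw [hv, hv1, hv2]; ring)
      _ ≤ _ := by omega

/-- `Gm (q*c) ≤ Gm (p*c) + 2` : raising a chain by one level. -/
lemma Gm_q_mul_le (hp : 0 < p) (x : ℤ) : Gm p q (q * x) ≤ Gm p q (p * x) + 2 := by
  obtain ⟨c, hv, hc⟩ := exists_chain_Gm (p := p) (q := q) (p * x)
  set c' : BSChain p q := ⟨c.k + 1, fun i => if i ≤ c.k then c.β i else q * x,
    fun i hi => by
      show p ∣ if i ≤ c.k then c.β i else q * x
      rcases Nat.lt_or_ge i c.k with h | h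
      · rw [if_pos (by omega)]; exact c.dvd i h
      · have : i = c.k := by omega
        subst this
        rw [if_pos le_rfl]
        have hvv : c.β c.k = p * x := hv
        exact hvv ▸ ⟨x, rfl⟩⟩ with hc'
  have hval : c'.value = q * x := by
    show (if c.k + 1 ≤ c.k then c.β (c.k+1) else q * x) = q * x
    rw [if_neg (by omega)]
  refine le_trans (Gm_le_cost hval) ?_
  rw [← hc]
  have hβ0 : c'.β 0 = c.β 0 := by
    show (if 0 ≤ c.k then c.β 0 else q * x) = c.β 0
    rw [if_pos (by omega)]
  have hdig : ∀ i < c.k, c'.digit i = c.digit i := by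
    intro i hi
    show (if i+1 ≤ c.k then c.β (i+1) else q*x) - q * ((if i ≤ c.k then c.β i else q*x) / p)
        = c.digit i
    rw [if_pos (by omega), if_pos (by omega)]
    rfl
  have hdigk : c'.digit c.k = 0 := by
    show (if c.k+1 ≤ c.k then c.β (c.k+1) else q*x) - q * ((if c.k ≤ c.k then c.β c.k else q*x) / p)
        = 0
    rw [if_neg (by omega), if_pos le_rfl]
    have : c.β c.k = p * x := hv
    rw [this, Int.mul_ediv_cancel_left _ (by omega : p ≠ 0)]
    ring
  show 2 * (c.k + 1) + (c'.β 0).natAbs + ∑ i ∈ Finset.range (c.k + 1), (c'.digit i).natAbs ≤ _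
  rw [Finset.sum_range_succ, hdigk, hβ0,
    Finset.sum_congr rfl (fun i hi => by rw [hdig i (Finset.mem_range.mp hi)])]
  have e1 : c.cost = 2 * c.k + (c.β 0).natAbs
      + ∑ i ∈ Finset.range c.k, (c.digit i).natAbs := rfl
  omega

/-- `Gm (p*c) ≤ Gm (q*c) + 2` : lowering. -/
lemma Gm_p_mul_le (hp : 0 < p) (hq : p < q) (x : ℤ) : Gm p q (p * x) ≤ Gm p q (q * x) + 2 := by
  obtain ⟨c, hv, hc⟩ := exists_chain_Gm (p := p) (q := q) (q * x)
  rcases Nat.eq_zero_or_pos c.k with hk | hk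
  · -- cost = |q x| ≥ |p x|
    have : c.cost = (q * x).natAbs := by
      rw [BSChain.cost, hk]
      simp [BSChain.value, hk] at hv
      simp [hv]
    calc Gm p q (p * x) ≤ (p * x).natAbs := Gm_le_natAbs _
      _ ≤ (q * x).natAbs := by
          rw [Int.natAbs_mul, Int.natAbs_mul]
          exact Nat.mul_le_mul_right _ (by omega)
      _ ≤ Gm p q (q * x) + 2 := by omega
  · obtain ⟨m, hm⟩ : ∃ m, c.k = m + 1 := ⟨c.k - 1, by omega⟩
    obtain ⟨w, hw⟩ := c.dvd m (by omega)
    -- digit m = q*x - q*w, divisible by q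
    set f : ℤ := x - w with hf
    have hdigm : c.digit m = q * f := by
      rw [BSChain.digit, hw, Int.mul_ediv_cancel_left _ (by omega : p ≠ 0),
        show c.β (m+1) = q * x from by rw [← hm]; exact hv]
      ring
    -- truncated chain
    set c' : BSChain p q := ⟨m, c.β, fun i hi => c.dvd i (by omega)⟩ with hc'
    have hval' : c'.value = p * w := by
      show c.β m = p * w
      exact hw
    have hcost' : c'.cost + 2 + (c.digit m).natAbs = c.cost := by
      show 2 * m + (c.β 0).natAbs + ∑ i ∈ Finset.range m, (c'.digit i).natAbs + 2 + _ = _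
      have : ∀ i, c'.digit i = c.digit i := fun i => rfl
      simp only [this]
      rw [BSChain.cost, hm, Finset.sum_range_succ]
      ring
    have h1 : Gm p q (p * x) = Gm p q (p * w + p * f) := by rw [hf]; ring_nf
    have h2 : Gm p q (p * w + p * f) ≤ Gm p q (p * w) + (p * f).natAbs :=
      Gm_add_le_natAbs _ _
    have h3 : Gm p q (p * w) ≤ c'.cost := Gm_le_cost hval'
    have h4 : (p * f).natAbs ≤ (q * f).natAbs := by
      rw [Int.natAbs_mul, Int.natAbs_mul]
      exact Nat.mul_le_mul_right _ (by omega)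
    have h5 : (c.digit m).natAbs = (q * f).natAbs := by rw [hdigm]
    omega

/-- Explicit cheap chain with `k = 1` for `2q ≤ |α|`. -/
lemma exists_k1_chain (hp : 0 < p) (hpq : p < q) {α : ℤ} (hα : 2 * q ≤ |α|) :
    ∃ c : BSChain p q, c.k = 1 ∧ c.value = α ∧ c.cost ≤ α.natAbs := by
  have hq : 0 < q := by
    have := abs_nonneg α
    nlinarith [hp.le, hpq]
  -- first treat the case α ≥ 0
  have main : ∀ β : ℤ, 2 * q ≤ β →
      ∃ c : BSChain p q, c.k = 1 ∧ c.value = β ∧ c.cost ≤ β.natAbs := by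
    intro β hβ
    set m : ℤ := β / q with hmdef
    set r : ℤ := β % q with hrdef
    have hm2 : 2 ≤ m := by
      rw [hmdef]
      exact Int.le_ediv_of_mul_le hq (by linarith)
    have hr0 : 0 ≤ r := Int.emod_nonneg β (by omega)
    have hrq : r < q := Int.emod_lt_of_pos β hq
    have hβeq : β = q * m + r := by rw [hmdef, hrdef]; exact (Int.mul_ediv_add_emod β q).symm
    have hdvd : ∀ i, i < 1 → p ∣ (fun i => if i = 0 then p * m else β) i := by
      intro i hi
      show p ∣ if i = 0 then p * m else β
      rw [if_pos (by omega)]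
      exact ⟨m, rfl⟩
    set ch : BSChain p q := ⟨1, fun i => if i = 0 then p * m else β, hdvd⟩ with hch
    refine ⟨ch, rfl, ?_, ?_⟩
    · show (if 1 = 0 then p * m else β) = β
      rw [if_neg (by omega)]
    · have hd0 : ch.digit 0 = r := by
        show (if 1 = 0 then p*m else β) - q * ((if 0 = 0 then p * m else β) / p) = r
        rw [if_neg (by omega), if_pos rfl, Int.mul_ediv_cancel_left _ (by omega : p ≠ 0)]
        linarith [hβeq]
      show 2 * 1 + (if 0 = 0 then p * m else β).natAbs
          + ∑ i ∈ Finset.range 1, (ch.digit i).natAbs ≤ β.natAbs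
      rw [if_pos rfl, Finset.sum_range_one, hd0]
      have hβ0 : 0 ≤ β := by linarith
      have hkey : (2 : ℤ) + (p * m) + r ≤ β := by
        rw [hβeq]
        nlinarith
      zify
      rw [abs_of_nonneg (by positivity : (0:ℤ) ≤ p * m), abs_of_nonneg hr0,
        abs_of_nonneg hβ0]
      linarith
  rcases le_or_gt 0 α with h0 | h0
  · exact main α (by rwa [abs_of_nonneg h0] at hα)
  · obtain ⟨c, hk, hv, hc⟩ := main (-α) (by rwa [abs_of_neg h0] at hα)
    refine ⟨⟨c.k, fun i => - c.β i, fun i hi => (c.dvd i hi).neg_right⟩, hk, ?_, ?_⟩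
    · show - c.β c.k = α
      rw [show c.β c.k = -α from hv]; ring
    · have hdig : ∀ i < c.k, BSChain.digit (p := p) (q := q)
          ⟨c.k, fun i => - c.β i, fun i hi => (c.dvd i hi).neg_right⟩ i = - c.digit i := by
        intro i hi
        obtain ⟨w, hw⟩ := c.dvd i hi
        show - c.β (i+1) - q * ((- c.β i) / p) = - c.digit i
        rw [BSChain.digit, hw, ← mul_neg,
          Int.mul_ediv_cancel_left _ (by omega : p ≠ 0),
          Int.mul_ediv_cancel_left _ (by omega : p ≠ 0)]
        ring
      show 2 * c.k + (- c.β 0).natAbs + ∑ i ∈ Finset.range c.k, _ ≤ α.natAbs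
      rw [Int.natAbs_neg,
        Finset.sum_congr rfl (fun i hi => by
          rw [hdig i (Finset.mem_range.mp hi), Int.natAbs_neg])]
      have : α.natAbs = (-α).natAbs := (Int.natAbs_neg α).symm
      rw [this]
      exact hc

end GmLemmas
-- ===================== Group-theoretic part =====================

namespace BSProof

variable (p q : ℤ)

def aa : BS p q := PresentedGroup.of false
def tt : BS p q := PresentedGroup.of true

lemma bs_rel : tt p q * aa p q ^ p * (tt p q)⁻¹ = aa p q ^ q := by
  have hmem : (FreeGroup.of true * (FreeGroup.of false) ^ p * (FreeGroup.of true)⁻¹ *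
      (FreeGroup.of false) ^ (-q)) ∈ Subgroup.normalClosure (bsRel p q) :=
    Subgroup.subset_normalClosure rfl
  have h : PresentedGroup.mk (bsRel p q) (FreeGroup.of true * (FreeGroup.of false) ^ p *
      (FreeGroup.of true)⁻¹ * (FreeGroup.of false) ^ (-q)) = 1 :=
    (QuotientGroup.eq_one_iff _).mpr hmem
  rw [map_mul, map_mul, map_mul, map_zpow, map_zpow, map_inv] at h
  have h2 : tt p q * aa p q ^ p * (tt p q)⁻¹ * (aa p q) ^ (-q) = 1 := h
  rw [zpow_neg] at h2
  exact mul_inv_eq_one.mp h2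

lemma conj_apow (c : ℤ) : tt p q * aa p q ^ (p * c) * (tt p q)⁻¹ = aa p q ^ (q * c) := by
  rw [zpow_mul, zpow_mul, ← conj_zpow, bs_rel]

lemma conj_apow' (c : ℤ) : (tt p q)⁻¹ * aa p q ^ (q * c) * tt p q = aa p q ^ (p * c) := by
  rw [← conj_apow p q c]
  group

-- ------------------- HNN model -------------------

abbrev Mz := Multiplicative ℤ

def zsub (a : ℤ) : Subgroup Mz := Subgroup.zpowers (Multiplicative.ofAdd a)

lemma mem_zsub {a : ℤ} (x : Mz) : x ∈ zsub a ↔ a ∣ x.toAdd := by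
  rw [zsub, Subgroup.mem_zpowers_iff]
  constructor
  · rintro ⟨k, hk⟩
    refine ⟨k, ?_⟩
    have h := congrArg Multiplicative.toAdd hk
    rw [← ofAdd_zsmul, toAdd_ofAdd] at h
    rw [← h, zsmul_eq_mul, Int.cast_id]
    ring
  · rintro ⟨c, hc⟩
    refine ⟨c, ?_⟩
    rw [← ofAdd_zsmul, zsmul_eq_mul, Int.cast_id, mul_comm, ← hc, ofAdd_toAdd]

def chiHom (a b : ℤ) (ha : a ≠ 0) : zsub a →* zsub b where
  toFun x := ⟨Multiplicative.ofAdd (b * ((Multiplicative.toAdd x.1) / a)),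
    (mem_zsub _).mpr (by rw [toAdd_ofAdd]; exact ⟨_, rfl⟩)⟩
  map_one' := by
    apply Subtype.ext
    show Multiplicative.ofAdd (b * ((Multiplicative.toAdd (1 : Mz)) / a)) = 1
    simp
  map_mul' x y := by
    apply Subtype.ext
    have hx : a ∣ Multiplicative.toAdd (x.1) := (mem_zsub _).mp x.2
    show Multiplicative.ofAdd (b * ((Multiplicative.toAdd (x.1 * y.1)) / a)) =
      Multiplicative.ofAdd (b * ((Multiplicative.toAdd x.1) / a)) *
      Multiplicative.ofAdd (b * ((Multiplicative.toAdd y.1) / a))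
    rw [← ofAdd_add, toAdd_mul, Int.add_ediv_of_dvd_left hx, mul_add]

def φBS (hp : p ≠ 0) (hq : q ≠ 0) : zsub p ≃* zsub q :=
  MonoidHom.toMulEquiv (chiHom p q hp) (chiHom q p hq)
    (by
      ext x
      show p * ((Multiplicative.toAdd (Multiplicative.ofAdd
        (q * ((Multiplicative.toAdd x.1) / p)))) / q) = Multiplicative.toAdd x.1
      rw [toAdd_ofAdd, Int.mul_ediv_cancel_left _ hq,
        Int.mul_ediv_cancel' ((mem_zsub _).mp x.2)])
    (by
      ext x
      show q * ((Multiplicative.toAdd (Multiplicative.ofAdd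
        (p * ((Multiplicative.toAdd x.1) / q)))) / p) = Multiplicative.toAdd x.1
      rw [toAdd_ofAdd, Int.mul_ediv_cancel_left _ hp,
        Int.mul_ediv_cancel' ((mem_zsub _).mp x.2)])

abbrev Hgrp (hp : p ≠ 0) (hq : q ≠ 0) :=
  HNNExtension Mz (zsub p) (zsub q) (φBS p q hp hq)

variable {p q}

variable (hp0 : p ≠ 0) (hq0 : q ≠ 0)

lemma of_zpow (x : ℤ) :
    (HNNExtension.of (Multiplicative.ofAdd (1:ℤ)) : Hgrp p q hp0 hq0) ^ x
      = HNNExtension.of (Multiplicative.ofAdd x) := by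
  rw [← map_zpow]
  congr 1
  rw [← ofAdd_zsmul, zsmul_eq_mul, Int.cast_id, mul_one]

lemma t_conj_of :
    (HNNExtension.t : Hgrp p q hp0 hq0) * HNNExtension.of (Multiplicative.ofAdd p)
      * (HNNExtension.t)⁻¹ = HNNExtension.of (Multiplicative.ofAdd q) := by
  have hmem : (Multiplicative.ofAdd p) ∈ zsub p := (mem_zsub _).mpr (by rw [toAdd_ofAdd])
  have ht := HNNExtension.t_mul_of (φ := φBS p q hp0 hq0) ⟨Multiplicative.ofAdd p, hmem⟩
  have hφ : (((φBS p q hp0 hq0) ⟨Multiplicative.ofAdd p, hmem⟩ : zsub q) : Mz)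
      = Multiplicative.ofAdd q := by
    show Multiplicative.ofAdd (q * ((Multiplicative.toAdd (Multiplicative.ofAdd p)) / p)) = _
    rw [toAdd_ofAdd]
    have hpp := Int.mul_ediv_cancel_left (b := (1:ℤ)) hp0
    rw [mul_one] at hpp
    rw [hpp, mul_one]
  rw [hφ] at ht
  rw [show ((⟨Multiplicative.ofAdd p, hmem⟩ : zsub p) : Mz) = Multiplicative.ofAdd p from rfl] at ht
  rw [ht, mul_inv_cancel_right]

lemma θ_rel : ∀ r ∈ bsRel p q,
    FreeGroup.lift (fun bb => if bb then (HNNExtension.t : Hgrp p q hp0 hq0)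
      else HNNExtension.of (Multiplicative.ofAdd (1:ℤ))) r = 1 := by
  intro r hr
  have hr' : r = FreeGroup.of true * (FreeGroup.of false) ^ p * (FreeGroup.of true)⁻¹ *
      (FreeGroup.of false) ^ (-q) := hr
  subst hr'
  rw [map_mul, map_mul, map_mul, map_zpow, map_zpow, map_inv,
    FreeGroup.lift_apply_of, FreeGroup.lift_apply_of]
  show (HNNExtension.t : Hgrp p q hp0 hq0) *
      (HNNExtension.of (Multiplicative.ofAdd (1:ℤ))) ^ p * (HNNExtension.t)⁻¹ *
      (HNNExtension.of (Multiplicative.ofAdd (1:ℤ))) ^ (-q) = 1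
  rw [of_zpow hp0 hq0 p, of_zpow hp0 hq0 (-q), t_conj_of hp0 hq0, ← map_mul, ← ofAdd_add]
  simp

noncomputable def θ : BS p q →* Hgrp p q hp0 hq0 :=
  PresentedGroup.toGroup (θ_rel hp0 hq0)

lemma θ_tt : θ hp0 hq0 (tt p q) = HNNExtension.t := by
  simp [θ, tt, PresentedGroup.toGroup.of]

lemma θ_aa : θ hp0 hq0 (aa p q) = HNNExtension.of (Multiplicative.ofAdd (1:ℤ)) := by
  simp [θ, aa, PresentedGroup.toGroup.of]

lemma θ_apow (x : ℤ) :
    θ hp0 hq0 (aa p q ^ x) = HNNExtension.of (Multiplicative.ofAdd x) := by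
  rw [map_zpow, θ_aa, of_zpow]

lemma apow_injective {x y : ℤ} (h : aa p q ^ x = aa p q ^ y) :
    p ≠ 0 → q ≠ 0 → x = y := by
  intro hp1 hq1
  have h1 := congrArg (θ hp1 hq1) h
  rw [θ_apow, θ_apow] at h1
  have h2 := HNNExtension.of_injective (φ := φBS p q hp1 hq1) h1
  exact Multiplicative.ofAdd.injective h2

end BSProof

namespace BSProof

variable (p q : ℤ)

def tOf : Bool → BS p q
  | true => tt p q
  | false => (tt p q)⁻¹

def evalL (L : List (Bool × ℤ)) : BS p q := (L.map (fun e => tOf p q e.1 * aa p q ^ e.2)).prod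

noncomputable def phiL (L : List (Bool × ℤ)) : ℕ := (L.map (fun e => 1 + Gm p q e.2)).sum

def lenL (L : List (Bool × ℤ)) : ℕ := (L.map (fun e => 1 + e.2.natAbs)).sum

lemma evalL_nil : evalL p q [] = 1 := rfl

lemma evalL_cons (e : Bool × ℤ) (L : List (Bool × ℤ)) :
    evalL p q (e :: L) = tOf p q e.1 * aa p q ^ e.2 * evalL p q L := by
  simp [evalL, mul_assoc]

lemma evalL_append (L1 L2 : List (Bool × ℤ)) :
    evalL p q (L1 ++ L2) = evalL p q L1 * evalL p q L2 := by
  simp [evalL]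

lemma phiL_append (L1 L2 : List (Bool × ℤ)) :
    phiL p q (L1 ++ L2) = phiL p q L1 + phiL p q L2 := by
  simp [phiL]

lemma phiL_le_lenL (L : List (Bool × ℤ)) : phiL p q L ≤ lenL L := by
  induction L with
  | nil => simp [phiL, lenL]
  | cons e L ih =>
    simp only [phiL, lenL, List.map_cons, List.sum_cons] at *
    have := Gm_le_natAbs (p := p) (q := q) e.2
    omega

lemma sandwich_t {G : Type*} [Group G] {t a x : G} (h : t * a * t⁻¹ = x) (b E : G) :
    t * a * (t⁻¹ * b * E) = x * b * E := by rw [← h]; group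

lemma sandwich_T {G : Type*} [Group G] {t a x : G} (h : t⁻¹ * a * t = x) (b E : G) :
    t⁻¹ * a * (t * b * E) = x * b * E := by rw [← h]; group

lemma pinch_t (c y : ℤ) (S : List (Bool × ℤ)) :
    evalL p q ((true, p*c) :: (false, y) :: S) = aa p q ^ (q*c + y) * evalL p q S := by
  rw [evalL_cons, evalL_cons]
  show tt p q * aa p q ^ (p*c) * ((tt p q)⁻¹ * aa p q ^ y * evalL p q S) = _
  rw [sandwich_t (conj_apow p q c), zpow_add]

lemma pinch_T (c y : ℤ) (S : List (Bool × ℤ)) :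
    evalL p q ((false, q*c) :: (true, y) :: S) = aa p q ^ (p*c + y) * evalL p q S := by
  rw [evalL_cons, evalL_cons]
  show (tt p q)⁻¹ * aa p q ^ (q*c) * (tt p q * aa p q ^ y * evalL p q S) = _
  rw [sandwich_T (conj_apow' p q c), zpow_add]

def addLast (z : ℤ) (W : ℤ × List (Bool × ℤ)) : ℤ × List (Bool × ℤ) :=
  match W.2.reverse with
  | [] => (W.1 + z, [])
  | e :: r => (W.1, ((e.1, e.2 + z) :: r).reverse)

lemma addLast_nil (z b : ℤ) : addLast z (b, []) = (b + z, []) := rfl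

lemma addLast_concat (z b : ℤ) (L : List (Bool × ℤ)) (e : Bool × ℤ) :
    addLast z (b, L ++ [e]) = (b, L ++ [(e.1, e.2 + z)]) := by
  simp [addLast]

lemma addLast_eval (z b : ℤ) (L : List (Bool × ℤ)) :
    aa p q ^ (addLast z (b, L)).1 * evalL p q (addLast z (b, L)).2
      = aa p q ^ b * evalL p q L * aa p q ^ z := by
  rcases List.eq_nil_or_concat L with rfl | ⟨L', e, rfl⟩
  · rw [addLast_nil]
    simp [evalL, zpow_add]
  · rw [List.concat_eq_append, addLast_concat]
    rw [evalL_append, evalL_append]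
    simp [evalL, zpow_add, mul_assoc]

lemma addLast_phi (hp : 0 < p) (z b : ℤ) (L : List (Bool × ℤ)) :
    Gm p q (addLast z (b, L)).1 + phiL p q (addLast z (b, L)).2
      ≤ Gm p q b + phiL p q L + Gm p q z := by
  rcases List.eq_nil_or_concat L with rfl | ⟨L', e, rfl⟩
  · rw [addLast_nil]
    simpa [phiL] using Gm_add_le hp b z
  · rw [List.concat_eq_append, addLast_concat]
    have h1 := Gm_add_le (p := p) (q := q) hp e.2 z
    simp only [phiL, List.map_append, List.sum_append, List.map_cons, List.sum_cons,
      List.map_nil, List.sum_nil]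
    omega

lemma addLast_len2 (z b : ℤ) (L : List (Bool × ℤ)) :
    (addLast z (b, L)).2.length = L.length := by
  rcases List.eq_nil_or_concat L with rfl | ⟨L', e, rfl⟩
  · rw [addLast_nil]
  · rw [List.concat_eq_append, addLast_concat]
    simp

lemma chain'_of_forall {A : Type*} (R : A → A → Prop) :
    ∀ (l : List A), (∀ (P S : List A) (a b : A), l = P ++ a :: b :: S → R a b) → l.Chain' R := by
  intro l
  induction l with
  | nil => intro _; exact List.isChain_nil
  | cons a l ih =>
    intro h
    cases l with
    | nil => exact List.isChain_singleton a
    | cons b l' =>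
      refine List.isChain_cons_cons.mpr ⟨h [] l' a b rfl, ih ?_⟩
      intro P S x y hxy
      exact h (a :: P) S x y (by rw [hxy, List.cons_append])

lemma θ_evalL (hp1 : p ≠ 0) (hq1 : q ≠ 0) (L : List (Bool × ℤ)) :
    θ hp1 hq1 (evalL p q L) = (L.map (fun e =>
      (HNNExtension.t : Hgrp p q hp1 hq1) ^ (((if e.1 then (1:ℤˣ) else -1) : ℤˣ) : ℤ)
        * HNNExtension.of (Multiplicative.ofAdd e.2))).prod := by
  induction L with
  | nil => simp [evalL]
  | cons e L ih =>
    rw [evalL_cons, map_mul, map_mul, ih, List.map_cons, List.prod_cons]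
    congr 1
    rw [θ_apow]
    congr 1
    rcases e with ⟨eb, ex⟩
    cases eb
    · show θ hp1 hq1 ((tt p q)⁻¹) = _
      rw [map_inv, θ_tt]
      simp
    · show θ hp1 hq1 (tt p q) = _
      rw [θ_tt]
      simp

lemma no_pinch_not_apow (hp1 : 1 ≤ p) (hq1 : p < q) (b : ℤ) (L : List (Bool × ℤ)) (hL : L ≠ [])
    (hpinch : ∀ (P S : List (Bool × ℤ)) (u u' : Bool) (x y : ℤ),
      L = P ++ (u, x) :: (u', y) :: S →
      ¬((u = true ∧ u' = false ∧ p ∣ x) ∨ (u = false ∧ u' = true ∧ q ∣ x)))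
    (α : ℤ) : aa p q ^ b * evalL p q L ≠ aa p q ^ α := by
  intro he
  have hp0 : p ≠ 0 := by omega
  have hq0 : q ≠ 0 := by omega
  set f : Bool × ℤ → ℤˣ × Mz := fun e => (if e.1 then 1 else -1, Multiplicative.ofAdd e.2)
    with hf
  have hchain : (L.map f).Chain' (fun a b =>
      a.2 ∈ HNNExtension.toSubgroup (zsub p) (zsub q) a.1 → a.1 = b.1) := by
    unfold List.Chain'
    rw [List.isChain_map]
    apply chain'_of_forall
    intro P S e e' hdecomp hmem
    rcases e with ⟨eb, ex⟩
    rcases e' with ⟨eb', ex'⟩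
    have hnp := hpinch P S eb eb' ex ex' hdecomp
    cases eb
    · cases eb'
      · rfl
      · exfalso
        apply hnp
        right
        have hmem' : Multiplicative.ofAdd ex ∈ zsub q := hmem
        exact ⟨rfl, rfl, (mem_zsub _).mp hmem'⟩
    · cases eb'
      · exfalso
        apply hnp
        left
        have hmem' : Multiplicative.ofAdd ex ∈ zsub p := hmem
        exact ⟨rfl, rfl, (mem_zsub _).mp hmem'⟩
      · rfl
  set w : HNNExtension.NormalWord.ReducedWord Mz (zsub p) (zsub q) :=
    ⟨Multiplicative.ofAdd b, L.map f, hchain⟩ with hw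
  have hprod : w.prod (φBS p q hp0 hq0) = θ hp0 hq0 (aa p q ^ b * evalL p q L) := by
    rw [map_mul, θ_apow, θ_evalL]
    show HNNExtension.of (Multiplicative.ofAdd b) * ((L.map f).map
      (fun x => (HNNExtension.t : Hgrp p q hp0 hq0) ^ (x.1 : ℤ) * HNNExtension.of x.2)).prod = _
    rw [List.map_map]
    rfl
  have hrange : w.prod (φBS p q hp0 hq0) ∈
      ((HNNExtension.of : Mz →* Hgrp p q hp0 hq0).range : Subgroup (Hgrp p q hp0 hq0)) := by
    rw [hprod, he, θ_apow]
    exact ⟨_, rfl⟩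
  have hnil := HNNExtension.ReducedWord.toList_eq_nil_of_mem_of_range
    (φ := φBS p q hp0 hq0) w hrange
  have : L.map f = [] := hnil
  simp only [List.map_eq_nil_iff] at this
  exact hL this

theorem lower_bound (hp1 : 1 ≤ p) (hq1 : p < q) :
    ∀ n (b : ℤ) (L : List (Bool × ℤ)) (α : ℤ), L.length = n →
      aa p q ^ b * evalL p q L = aa p q ^ α →
      Gm p q α ≤ Gm p q b + phiL p q L := by
  intro n
  induction n using Nat.strong_induction_on with
  | _ n ih =>
    intro b L α hn he
    have hp0 : (0:ℤ) < p := by omega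
    by_cases hpinch : ∃ (P S : List (Bool × ℤ)) (u u' : Bool) (x y : ℤ),
        L = P ++ (u, x) :: (u', y) :: S ∧
        ((u = true ∧ u' = false ∧ p ∣ x) ∨ (u = false ∧ u' = true ∧ q ∣ x))
    · obtain ⟨P, S, u, u', x, y, hL, hcond⟩ := hpinch
      rcases hcond with ⟨hu, hu', c, rfl⟩ | ⟨hu, hu', c, rfl⟩
      · subst hu hu' hL
        have heq : aa p q ^ (addLast (q*c + y) (b, P)).1 *
            evalL p q ((addLast (q*c + y) (b, P)).2 ++ S) = aa p q ^ α := by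
          rw [evalL_append, ← mul_assoc, addLast_eval, ← he, evalL_append, pinch_t]
          simp only [mul_assoc]
        have hlen2 : ((addLast (q*c + y) (b, P)).2 ++ S).length = P.length + S.length := by
          rw [List.length_append, addLast_len2]
        have hlt : P.length + S.length < n := by
          simp only [List.length_append, List.length_cons] at hn
          omega
        have hrec := ih (P.length + S.length) hlt (addLast (q*c + y) (b, P)).1
          ((addLast (q*c + y) (b, P)).2 ++ S) α hlen2 heq
        rw [phiL_append] at hrec
        have h1 := addLast_phi p q hp0 (q*c + y) b P
        have h2 : Gm p q (q*c + y) ≤ Gm p q (q*c) + Gm p q y := Gm_add_le hp0 _ _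
        have h3 : Gm p q (q*c) ≤ Gm p q (p*c) + 2 := Gm_q_mul_le hp0 _
        have h4 : phiL p q ((true, p*c) :: (false, y) :: S)
            = (1 + Gm p q (p*c)) + ((1 + Gm p q y) + phiL p q S) := by
          simp [phiL]
        rw [phiL_append, h4]
        omega
      · subst hu hu' hL
        have heq : aa p q ^ (addLast (p*c + y) (b, P)).1 *
            evalL p q ((addLast (p*c + y) (b, P)).2 ++ S) = aa p q ^ α := by
          rw [evalL_append, ← mul_assoc, addLast_eval, ← he, evalL_append, pinch_T]
          simp only [mul_assoc]
        have hlen2 : ((addLast (p*c + y) (b, P)).2 ++ S).length = P.length + S.length := by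
          rw [List.length_append, addLast_len2]
        have hlt : P.length + S.length < n := by
          simp only [List.length_append, List.length_cons] at hn
          omega
        have hrec := ih (P.length + S.length) hlt (addLast (p*c + y) (b, P)).1
          ((addLast (p*c + y) (b, P)).2 ++ S) α hlen2 heq
        rw [phiL_append] at hrec
        have h1 := addLast_phi p q hp0 (p*c + y) b P
        have h2 : Gm p q (p*c + y) ≤ Gm p q (p*c) + Gm p q y := Gm_add_le hp0 _ _
        have h3 : Gm p q (p*c) ≤ Gm p q (q*c) + 2 := Gm_p_mul_le hp0 hq1 _
        have h4 : phiL p q ((false, q*c) :: (true, y) :: S)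
            = (1 + Gm p q (q*c)) + ((1 + Gm p q y) + phiL p q S) := by
          simp [phiL]
        rw [phiL_append, h4]
        omega
    · have hpinch' : ∀ (P S : List (Bool × ℤ)) (u u' : Bool) (x y : ℤ),
          L = P ++ (u, x) :: (u', y) :: S →
          ¬((u = true ∧ u' = false ∧ p ∣ x) ∨ (u = false ∧ u' = true ∧ q ∣ x)) :=
        fun P S u u' x y hdec hcond => hpinch ⟨P, S, u, u', x, y, hdec, hcond⟩
      cases L with
      | nil =>
        have hb : aa p q ^ b = aa p q ^ α := by simpa [evalL] using he
        have hba := apow_injective hb (by omega) (by omega)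
        rw [← hba]
        simp [phiL]
      | cons e L' =>
        exact absurd he (no_pinch_not_apow p q hp1 hq1 b (e :: L') (by simp) hpinch' α)

end BSProof

namespace BSProof

variable (p q : ℤ)

lemma eval_cons (l : Letter) (w : List Letter) :
    eval p q (l :: w) = evalLetter p q l * eval p q w := by simp [eval]

lemma eval_append (u v : List Letter) :
    eval p q (u ++ v) = eval p q u * eval p q v := by simp [eval]

lemma exists_gw (w : List Letter) :
    ∃ (b : ℤ) (L : List (Bool × ℤ)), aa p q ^ b * evalL p q L = eval p q w ∧
      b.natAbs + lenL L ≤ w.length := by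
  induction w with
  | nil => exact ⟨0, [], by simp [evalL_nil, eval], by simp [lenL]⟩
  | cons l w ih =>
    obtain ⟨b, L, he, hl⟩ := ih
    cases l with
    | a =>
      refine ⟨1 + b, L, ?_, ?_⟩
      · rw [zpow_add, mul_assoc, he, eval_cons, zpow_one]
        rfl
      · simp only [List.length_cons]
        have h := Int.natAbs_add_le 1 b
        omega
    | A =>
      refine ⟨-1 + b, L, ?_, ?_⟩
      · rw [zpow_add, mul_assoc, he, eval_cons, zpow_neg_one]
        rfl
      · simp only [List.length_cons]
        have h := Int.natAbs_add_le (-1) b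
        omega
    | t =>
      refine ⟨0, (true, b) :: L, ?_, ?_⟩
      · rw [evalL_cons, zpow_zero, one_mul, mul_assoc, he, eval_cons]
        rfl
      · simp only [List.length_cons, lenL, List.map_cons, List.sum_cons] at *
        omega
    | T =>
      refine ⟨0, (false, b) :: L, ?_, ?_⟩
      · rw [evalL_cons, zpow_zero, one_mul, mul_assoc, he, eval_cons]
        rfl
      · simp only [List.length_cons, lenL, List.map_cons, List.sum_cons] at *
        omega

lemma eval_aPow (x : ℤ) : eval p q (aPow x) = aa p q ^ x := by
  rcases le_or_gt 0 x with hx | hx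
  · rw [aPow, if_pos hx]
    simp only [eval, List.map_replicate, List.prod_replicate]
    rw [show evalLetter p q Letter.a = aa p q from rfl, ← zpow_natCast,
      Int.toNat_of_nonneg hx]
  · rw [aPow, if_neg (by omega)]
    simp only [eval, List.map_replicate, List.prod_replicate]
    rw [show evalLetter p q Letter.A = (aa p q)⁻¹ from rfl, inv_pow, ← zpow_natCast,
      Int.toNat_of_nonneg (by omega : (0:ℤ) ≤ -x), ← zpow_neg, neg_neg]

lemma length_aPow (x : ℤ) : (aPow x).length = x.natAbs := by
  rcases le_or_gt 0 x with hx | hx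
  · rw [aPow, if_pos hx, List.length_replicate]
    omega
  · rw [aPow, if_neg (by omega), List.length_replicate]
    omega

lemma eval_replicate_t (k : ℕ) : eval p q (List.replicate k Letter.t) = tt p q ^ k := by
  simp only [eval, List.map_replicate, List.prod_replicate]
  rfl

lemma eval_flatten (Ls : List (List Letter)) :
    eval p q Ls.flatten = (Ls.map (eval p q)).prod := by
  induction Ls with
  | nil => rfl
  | cons l Ls ih => rw [List.flatten_cons, eval_append, ih, List.map_cons, List.prod_cons]

lemma mountain_group (hp1 : 1 ≤ p) :
    ∀ (k : ℕ) (β : ℕ → ℤ), (∀ i, i < k → p ∣ β i) →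
    tt p q ^ k * aa p q ^ (β 0) *
      (List.ofFn (fun i : Fin k => (tt p q)⁻¹ * aa p q ^ (β (i+1) - q * (β i / p)))).prod
      = aa p q ^ (β k) := by
  intro k
  induction k with
  | zero =>
    intro β _
    simp
  | succ k ih =>
    intro β hdvd
    rw [List.ofFn_succ, List.prod_cons]
    obtain ⟨w, hw⟩ := hdvd 0 (by omega)
    have hdiv : β 0 / p = w := by rw [hw, Int.mul_ediv_cancel_left _ (by omega : p ≠ 0)]
    have hstep : tt p q * aa p q ^ (β 0) * (tt p q)⁻¹ = aa p q ^ (q*w) := by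
      rw [hw]
      exact conj_apow p q w
    have hkey : ∀ E : BS p q, tt p q ^ (k+1) * aa p q ^ (β 0) *
        ((tt p q)⁻¹ * aa p q ^ (β 1 - q * (β 0 / p)) * E)
        = tt p q ^ k * (aa p q ^ (β 1) * E) := by
      intro E
      rw [hdiv]
      calc tt p q ^ (k+1) * aa p q ^ (β 0) * ((tt p q)⁻¹ * aa p q ^ (β 1 - q * w) * E)
          = tt p q ^ k * ((tt p q * aa p q ^ (β 0) * (tt p q)⁻¹) *
              (aa p q ^ (β 1 - q * w) * E)) := by
            rw [pow_succ]
            group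
        _ = tt p q ^ k * (aa p q ^ (q*w) * (aa p q ^ (β 1 - q * w) * E)) := by rw [hstep]
        _ = tt p q ^ k * (aa p q ^ (β 1) * E) := by
            congr 1
            rw [← mul_assoc, ← zpow_add]
            congr 1
            ring
    simp only [Fin.val_zero, Fin.val_succ, zero_add]
    rw [hkey, ← mul_assoc]
    exact ih (fun n => β (n+1)) (fun i h => hdvd (i+1) (by omega))

lemma realize (hp1 : 1 ≤ p) (c : BSChain p q) :
    eval p q (List.replicate c.k Letter.t ++ aPow (c.β 0) ++
      (List.ofFn fun i : Fin c.k => Letter.T :: aPow (c.digit i)).flatten)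
      = aa p q ^ c.value ∧
    (List.replicate c.k Letter.t ++ aPow (c.β 0) ++
      (List.ofFn fun i : Fin c.k => Letter.T :: aPow (c.digit i)).flatten).length = c.cost := by
  constructor
  · rw [eval_append, eval_append, eval_replicate_t, eval_aPow, eval_flatten, List.map_ofFn]
    have hfn : (eval p q ∘ fun i : Fin c.k => Letter.T :: aPow (c.digit i))
        = fun i : Fin c.k => (tt p q)⁻¹ * aa p q ^ (c.β (↑i+1) - q * (c.β ↑i / p)) := by
      funext i
      show eval p q (Letter.T :: aPow (c.digit i)) = _
      rw [eval_cons, eval_aPow]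
      rfl
    rw [hfn]
    exact mountain_group p q hp1 c.k c.β c.dvd
  · rw [List.length_append, List.length_append, List.length_replicate, length_aPow,
      List.length_flatten, List.map_ofFn]
    have hfn : (List.length ∘ fun i : Fin c.k => Letter.T :: aPow (c.digit i))
        = fun i : Fin c.k => 1 + (c.digit i).natAbs := by
      funext i
      show (Letter.T :: aPow (c.digit i)).length = _
      rw [List.length_cons, length_aPow]
      omega
    rw [hfn, List.sum_ofFn]
    have hconv : (∑ i : Fin c.k, (1 + (c.digit ↑i).natAbs))
        = ∑ i ∈ Finset.range c.k, (1 + (c.digit i).natAbs) :=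
      Fin.sum_univ_eq_sum_range (fun j => 1 + (c.digit j).natAbs) c.k
    rw [hconv]
    have hsplit : ∑ i ∈ Finset.range c.k, (1 + (c.digit i).natAbs)
        = c.k + ∑ i ∈ Finset.range c.k, (c.digit i).natAbs := by
      rw [Finset.sum_add_distrib, Finset.sum_const, Finset.card_range, smul_eq_mul, mul_one]
    have hcost : c.cost = 2 * c.k + (c.β 0).natAbs
        + ∑ i ∈ Finset.range c.k, (c.digit i).natAbs := rfl
    omega

end BSProof

theorem horocyclic_large_geodesic_uses_t (p q α : ℤ) (hp : 1 ≤ p) (hpq : p < q)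
    (hα : 2 * q ≤ |α|) :
    ∃ (k : ℕ) (α0 : ℤ) (γs : Fin k → ℤ),
      1 ≤ k ∧
      eval p q (List.replicate k Letter.t ++ aPow α0 ++
        (List.ofFn fun i : Fin k => Letter.T :: aPow (γs i)).flatten) = eval p q (aPow α) ∧
      Geodesic p q (List.replicate k Letter.t ++ aPow α0 ++
        (List.ofFn fun i : Fin k => Letter.T :: aPow (γs i)).flatten) ∧
      Letter.t ∈ (List.replicate k Letter.t ++ aPow α0 ++
        (List.ofFn fun i : Fin k => Letter.T :: aPow (γs i)).flatten) := by
  classical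
  have hp0 : (0:ℤ) < p := by omega
  obtain ⟨c0, hc0v, hc0c⟩ := exists_chain_Gm (p := p) (q := q) α
  obtain ⟨cE, hEk, hEv, hEc⟩ := exists_k1_chain hp0 hpq hα
  obtain ⟨C, hCk, hCv, hCc⟩ : ∃ C : BSChain p q, 1 ≤ C.k ∧ C.value = α ∧ C.cost = Gm p q α := by
    rcases Nat.eq_zero_or_pos c0.k with h0 | h0
    · have hβ : c0.β 0 = α := by
        have h := hc0v
        rw [BSChain.value, h0] at h
        exact h
      have hcost0 : c0.cost = α.natAbs := by
        rw [BSChain.cost, h0, hβ]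
        simp
      have h1 : Gm p q α ≤ cE.cost := Gm_le_cost hEv
      refine ⟨cE, by omega, hEv, by omega⟩
    · exact ⟨c0, h0, hc0v, hc0c⟩
  obtain ⟨heval, hlen⟩ := BSProof.realize p q hp C
  refine ⟨C.k, C.β 0, fun i => C.digit i, hCk, ?_, ?_, ?_⟩
  · show eval p q (List.replicate C.k Letter.t ++ aPow (C.β 0) ++
        (List.ofFn fun i : Fin C.k => Letter.T :: aPow (C.digit i)).flatten)
        = eval p q (aPow α)
    rw [BSProof.eval_aPow, ← hCv]
    exact heval
  · intro v hv
    have hv' : eval p q v = BSProof.aa p q ^ α := by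
      have hv2 : eval p q v = eval p q (List.replicate C.k Letter.t ++ aPow (C.β 0) ++
        (List.ofFn fun i : Fin C.k => Letter.T :: aPow (C.digit i)).flatten) := hv
      rw [hv2, heval, hCv]
    obtain ⟨b, L, he, hl⟩ := BSProof.exists_gw p q v
    have hlb := BSProof.lower_bound p q hp hpq L.length b L α rfl (by rw [he, hv'])
    have h2 : Gm p q b ≤ b.natAbs := Gm_le_natAbs b
    have h3 := BSProof.phiL_le_lenL p q L
    show (List.replicate C.k Letter.t ++ aPow (C.β 0) ++
        (List.ofFn fun i : Fin C.k => Letter.T :: aPow (C.digit i)).flatten).length ≤ v.length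
    rw [hlen]
    omega
  · refine List.mem_append.mpr (Or.inl (List.mem_append.mpr (Or.inl ?_)))
    exact List.mem_replicate.mpr ⟨by omega, rfl⟩
end

section
/- Let p, q be integers with 1 ≤ p < q and let α ∈ ℤ with |α| ≥ 3q. Then the geodesic length of the element a^α in BS(p,q) is strictly smaller than |α|; equivalently, if the geodesic length of a^α equals |α| then |α| < 3q. -/
lemma eval_append (p q : ℤ) (u v : List Letter) :
    eval p q (u ++ v) = eval p q u * eval p q v := by
  simp [eval]

lemma eval_aPow (p q x : ℤ) :
    eval p q (aPow x) = (PresentedGroup.of false : BS p q) ^ x := by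
  unfold aPow
  split
  · rename_i h
    simp only [eval, List.map_replicate, List.prod_replicate, evalLetter]
    rw [← zpow_natCast, Int.toNat_of_nonneg h]
  · rename_i h
    push_neg at h
    simp only [eval, List.map_replicate, List.prod_replicate, evalLetter]
    rw [inv_pow, ← zpow_natCast, Int.toNat_of_nonneg (by omega), ← zpow_neg, neg_neg]

lemma aPow_length (x : ℤ) : (aPow x).length = x.natAbs := by
  unfold aPow; split <;> simp <;> omega

lemma bs_rel_one (p q : ℤ) :
    (PresentedGroup.of true : BS p q) * (PresentedGroup.of false) ^ p *
      (PresentedGroup.of true)⁻¹ * (PresentedGroup.of false) ^ (-q) = 1 := by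
  have h : (FreeGroup.of true * (FreeGroup.of false) ^ p * (FreeGroup.of true)⁻¹
      * (FreeGroup.of false) ^ (-q)) ∈ Subgroup.normalClosure (bsRel p q) :=
    Subgroup.subset_normalClosure (by simp [bsRel])
  have := PresentedGroup.mk_eq_one_iff.mpr h
  simpa [PresentedGroup.of, QuotientGroup.mk_mul, QuotientGroup.mk_zpow,
    QuotientGroup.mk_inv] using this

lemma bs_conj (p q m : ℤ) :
    (PresentedGroup.of true : BS p q) * (PresentedGroup.of false) ^ (m * p) *
      (PresentedGroup.of true)⁻¹ = (PresentedGroup.of false) ^ (m * q) := by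
  have h1 := bs_rel_one p q
  have h2 : (PresentedGroup.of true : BS p q) * (PresentedGroup.of false) ^ p *
      (PresentedGroup.of true)⁻¹ = (PresentedGroup.of false) ^ q := by
    rw [zpow_neg] at h1
    exact (mul_inv_eq_one.mp h1)
  calc (PresentedGroup.of true : BS p q) * (PresentedGroup.of false) ^ (m * p) *
      (PresentedGroup.of true)⁻¹
      = ((PresentedGroup.of true : BS p q) * (PresentedGroup.of false) ^ p *
        (PresentedGroup.of true)⁻¹) ^ m := by
        rw [conj_zpow, mul_comm m p, zpow_mul]
    _ = ((PresentedGroup.of false : BS p q) ^ q) ^ m := by rw [h2]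
    _ = _ := by rw [← zpow_mul, mul_comm]

theorem horocyclic_large_not_unary_geodesic (p q α : ℤ) (hp : 1 ≤ p) (hpq : p < q)
    (hα : 3 * q ≤ |α|) :
    geodesicLength p q (eval p q (aPow α)) < α.natAbs := by
  have hq : 0 < q := by omega
  set a : BS p q := PresentedGroup.of false with ha
  set t : BS p q := PresentedGroup.of true with ht
  -- pick m, r
  have key : ∀ w : List Letter, eval p q w = eval p q (aPow α) →
      w.length < α.natAbs → geodesicLength p q (eval p q (aPow α)) < α.natAbs := by
    intro w hw hl
    have : geodesicLength p q (eval p q (aPow α)) ≤ w.length :=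
      Nat.sInf_le ⟨w, hw, rfl⟩
    omega
  rcases le_or_gt 0 α with hpos | hneg
  · set m : ℤ := α / q with hm
    set r : ℤ := α % q with hr
    have hr0 : 0 ≤ r := Int.emod_nonneg α (by omega)
    have hrq : r < q := Int.emod_lt_of_pos α hq
    have hmr : α = m * q + r := by
      rw [hm, hr, mul_comm]; exact (Int.mul_ediv_add_emod α q).symm
    have hm3 : 3 ≤ m := by
      rw [abs_of_nonneg hpos] at hα
      by_contra h
      push_neg at h
      nlinarith
    refine key ([Letter.t] ++ aPow (m * p) ++ [Letter.T] ++ aPow r) ?_ ?_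
    · rw [eval_append, eval_append, eval_append, eval_aPow, eval_aPow, eval_aPow]
      have : eval p q [Letter.t] = t := by simp [eval, evalLetter, ht]
      rw [this]
      have : eval p q [Letter.T] = t⁻¹ := by simp [eval, evalLetter, ht]
      rw [this]
      rw [bs_conj p q m, ← zpow_add, ← hmr]
    · simp only [List.length_append, aPow_length, List.length_singleton]
      have h1 : (m * p).natAbs = m * p := Int.natAbs_of_nonneg (by positivity)
      have h2 : (r).natAbs = r := Int.natAbs_of_nonneg hr0
      have h3 : (α).natAbs = α := Int.natAbs_of_nonneg hpos
      have : m * p + 3 ≤ m * q := by nlinarith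
      omega
  · set β : ℤ := -α with hβ
    have hβ3 : 3 * q ≤ β := by rw [abs_of_neg hneg] at hα; omega
    set m : ℤ := β / q with hm
    set r : ℤ := β % q with hr
    have hr0 : 0 ≤ r := Int.emod_nonneg β (by omega)
    have hrq : r < q := Int.emod_lt_of_pos β hq
    have hmr : β = m * q + r := by
      rw [hm, hr, mul_comm]; exact (Int.mul_ediv_add_emod β q).symm
    have hm3 : 3 ≤ m := by
      by_contra h
      push_neg at h
      nlinarith
    refine key (aPow (-r) ++ [Letter.t] ++ aPow (-(m * p)) ++ [Letter.T]) ?_ ?_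
    · rw [eval_append, eval_append, eval_append, eval_aPow, eval_aPow, eval_aPow]
      have e1 : eval p q [Letter.t] = t := by simp [eval, evalLetter, ht]
      have e2 : eval p q [Letter.T] = t⁻¹ := by simp [eval, evalLetter, ht]
      rw [e1, e2]
      have hc : t * PresentedGroup.of false ^ (-(m * p)) * t⁻¹
          = (PresentedGroup.of false : BS p q) ^ ((-m) * q) := by
        rw [show -(m * p) = (-m) * p by ring, ht]; exact bs_conj p q (-m)
      simp only [mul_assoc] at hc ⊢
      rw [hc, ← zpow_add]
      congr 1
      have : (-m) * q = -(m * q) := by ring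
      rw [this]
      omega
    · simp only [List.length_append, aPow_length, List.length_singleton]
      have h1 : (-(m * p)).natAbs = m * p := by
        rw [Int.natAbs_neg]; exact Int.natAbs_of_nonneg (by positivity)
      have h2 : (-r).natAbs = r := by rw [Int.natAbs_neg]; exact Int.natAbs_of_nonneg hr0
      have h3 : (α).natAbs = β := by omega
      have : m * p + 3 ≤ m * q := by nlinarith
      omega
end
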